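/- arXiv:1810.04746 — 5 statements merged into one kernel-verified Lean document; each statement's English description precedes it below -/
import Mathlib

section
/- For all integers r ≥ 2 and s ≥ 3, there exists a constant C such that for all m ≥ 1, |k_s(CT_r(m)) − c_{r,s}·m^{s/2}| ≤ C·m^{(s−1)/2}. -/
open SimpleGraph

universe u v

/-- `G` contains a copy of `F` as a (not necessarily induced) subgraph. -/
def ContainsCopy {α : Type u} {β : Type v} (F : SimpleGraph α) (G : SimpleGraph β) : Prop :=
  ∃ f : α → β, Function.Injective f ∧ ∀ ⦃a b⦄, F.Adj a b → G.Adj (f a) (f b)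

/-- The number of `s`-cliques of `G`. -/
noncomputable def cliqueCount {V : Type u} (G : SimpleGraph V) (s : ℕ) : ℕ :=
  Set.ncard {S : Finset V | G.IsNClique s S}

/-- `G` has exactly `m` edges. -/
def HasEdgeCount {V : Type u} (G : SimpleGraph V) (m : ℕ) : Prop :=
  G.edgeSet.Finite ∧ G.edgeSet.ncard = m

/-- `mex_{K_s}(m, F)`: the maximum number of `s`-cliques in an `F`-free graph with `m` edges
(no restriction on the number of vertices). -/
noncomputable def mexCliques {α : Type u} (s m : ℕ) (F : SimpleGraph α) : ℕ :=
  sSup {k : ℕ | ∃ G : SimpleGraph ℕ, ¬ ContainsCopy F G ∧ HasEdgeCount G m ∧ cliqueCount G s = k}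

/-- The `t`-fold blowup of `K_r`: the complete `r`-partite graph with all parts of size `t`. -/
def blowup (r t : ℕ) : SimpleGraph (Fin r × Fin t) where
  Adj p q := p.1 ≠ q.1
  symm := ⟨fun _ _ h => h.symm⟩
  loopless := ⟨fun _ h => h rfl⟩

/-- Any two distinct elements of `A` are incongruent mod `r`. -/
def IsRainbow (r : ℕ) (A : Finset ℕ) : Prop :=
  ∀ i ∈ A, ∀ j ∈ A, i ≠ j → i % r ≠ j % r

/-- The set consisting of the first `N` `k`-element sets in the `r`-partite colex order. -/
def rpartiteColexInitial (r k N : ℕ) : Set (Finset ℕ) :=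
  {A | A.card = k ∧ IsRainbow r A ∧
    Set.ncard {B | B.card = k ∧ IsRainbow r B ∧
      toColex B ≤ toColex A} ≤ N}

/-- The colex Turán graph `CT_r(m)`: the graph on `ℕ` whose edges are the first `m`
two-element sets in the `r`-partite colex order. -/
def colexTuran (r m : ℕ) : SimpleGraph ℕ where
  Adj a b := a ≠ b ∧ ({a, b} : Finset ℕ) ∈ rpartiteColexInitial r 2 m
  symm := by
    constructor
    intro a b h
    refine ⟨h.1.symm, ?_⟩
    rw [Finset.pair_comm]
    exact h.2
  loopless := ⟨fun a h => h.1 rfl⟩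

/-- `t_r(n)`: the number of edges of the Turán graph `T_r(n)`. -/
noncomputable def turanEdges (r n : ℕ) : ℕ := (turanGraph n r).edgeSet.ncard

/-- `β_r = (2(r-1)/r)^{1/2}`. -/
noncomputable def betaR (r : ℕ) : ℝ := Real.sqrt (2 * ((r : ℝ) - 1) / r)

/-- `c_{r,s} = C(r,s) / C(r,2)^{s/2}`. -/
noncomputable def cRS (r s : ℕ) : ℝ := (r.choose s : ℝ) / ((r.choose 2 : ℝ) ^ ((s : ℝ) / 2))

/-- `ex_{K_t}(n, F)`: the maximum number of `t`-cliques in an `F`-free graph on `n` vertices. -/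
noncomputable def exCliques {α : Type u} (t n : ℕ) (F : SimpleGraph α) : ℕ :=
  sSup {k : ℕ | ∃ G : SimpleGraph (Fin n), ¬ ContainsCopy F G ∧ cliqueCount G t = k}

/-- `ex(n, F)`: the maximum number of edges in an `F`-free graph on `n` vertices. -/
noncomputable def exEdges {α : Type u} (n : ℕ) (F : SimpleGraph α) : ℕ :=
  sSup {k : ℕ | ∃ G : SimpleGraph (Fin n), ¬ ContainsCopy F G ∧ G.edgeSet.ncard = k}

/-- The shadow of the family `F` at level `p`. -/
def shadowP (p : ℕ) (F : Set (Finset ℕ)) : Set (Finset ℕ) :=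
  {B | B.card = p ∧ ∃ A ∈ F, B ⊆ A}

namespace CTAux
open Finset

def RBs (r t s : ℕ) : Finset (Finset ℕ) :=
  ((Finset.range t).powersetCard s).filter
    (fun A => ∀ i ∈ A, ∀ j ∈ A, i ≠ j → i % r ≠ j % r)

lemma mem_RBs {r t s : ℕ} {A : Finset ℕ} :
    A ∈ RBs r t s ↔ A ⊆ Finset.range t ∧ A.card = s ∧ IsRainbow r A := by
  simp only [RBs, mem_filter, mem_powersetCard, IsRainbow, and_assoc]

def Sig (r Q s : ℕ) : Finset ((T : Finset ℕ) × (∀ a ∈ T, ℕ)) :=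
  ((Finset.range r).powersetCard s).sigma (fun T => T.pi (fun _ => Finset.range Q))

lemma card_Sig (r Q s : ℕ) : (Sig r Q s).card = r.choose s * Q ^ s := by
  rw [Sig, Finset.card_sigma]
  rw [Finset.sum_congr rfl (fun T hT => ?_), Finset.sum_const,
    Finset.card_powersetCard, Finset.card_range, smul_eq_mul]
  rw [Finset.card_pi]
  simp only [Finset.card_range, Finset.prod_const]
  rw [(Finset.mem_powersetCard.1 hT).2]

def gg (r : ℕ) (S : Finset ℕ) (i : ℕ) : ℕ :=
  (S.filter (fun x => x % r = i)).sum (fun x => x / r)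

lemma gg_eq {r : ℕ} {S : Finset ℕ} (hS : IsRainbow r S) {x : ℕ} (hx : x ∈ S) :
    gg r S (x % r) = x / r := by
  have : S.filter (fun y => y % r = x % r) = {x} := by
    ext y
    simp only [mem_filter, mem_singleton]
    constructor
    · rintro ⟨hy, hyx⟩
      by_contra hne
      exact hS y hy x hx hne hyx
    · rintro rfl; exact ⟨hx, rfl⟩
  rw [gg, this, Finset.sum_singleton]

lemma RBs_card_le (r t s : ℕ) (hr : 0 < r) :
    (RBs r t s).card ≤ r.choose s * (t / r + 1) ^ s := by
  classical
  rw [← card_Sig r (t / r + 1) s]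
  apply Finset.card_le_card_of_injOn
    (fun A => ⟨A.image (· % r), fun i _ => gg r A i⟩)
  · -- maps to
    intro A hA
    rw [Finset.mem_coe, mem_RBs] at hA
    obtain ⟨hAt, hAs, hArb⟩ := hA
    rw [Finset.mem_coe, Sig, Finset.mem_sigma]
    constructor
    · rw [Finset.mem_powersetCard]
      constructor
      · intro i hi
        rw [Finset.mem_image] at hi
        obtain ⟨x, _, rfl⟩ := hi
        exact Finset.mem_range.2 (Nat.mod_lt _ hr)
      · rw [Finset.card_image_of_injOn, hAs]
        intro x hx y hy hxy
        by_contra hne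
        exact hArb x hx y hy hne hxy
    · rw [Finset.mem_pi]
      intro i hi
      dsimp only at hi ⊢
      rw [Finset.mem_image] at hi
      obtain ⟨x, hx, rfl⟩ := hi
      rw [gg_eq hArb hx, Finset.mem_range]
      have : x / r ≤ t / r := Nat.div_le_div_right (le_of_lt (Finset.mem_range.1 (hAt hx)))
      omega
  · -- injective
    intro A hA B hB hAB
    simp only [Finset.mem_coe, mem_RBs] at hA hB
    have hT : A.image (· % r) = B.image (· % r) := congrArg Sigma.fst hAB
    have hfun : ∀ i, i ∈ A.image (· % r) → gg r A i = gg r B i := by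
      intro i hi
      have hi' : i ∈ B.image (· % r) := hT ▸ hi
      have h := congrArg
        (fun p : (T : Finset ℕ) × (∀ a ∈ T, ℕ) => if h : i ∈ p.1 then p.2 i h else 0) hAB
      dsimp only at h
      rwa [dif_pos hi, dif_pos hi'] at h
    have key : ∀ (X Y : Finset ℕ), IsRainbow r X → IsRainbow r Y →
        X.image (· % r) = Y.image (· % r) →
        (∀ i, i ∈ X.image (· % r) → gg r X i = gg r Y i) → X ⊆ Y := by
      intro X Y hXrb hYrb hTXY hgXY x hx
      have hmem : x % r ∈ X.image (· % r) := Finset.mem_image_of_mem _ hx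
      have hxi : x % r ∈ Y.image (· % r) := hTXY ▸ hmem
      rw [Finset.mem_image] at hxi
      obtain ⟨y, hy, hyx⟩ := hxi
      have h1 : gg r X (x % r) = x / r := gg_eq hXrb hx
      have h2 : gg r Y (x % r) = y / r := by rw [← hyx]; exact gg_eq hYrb hy
      have : x = y := by
        have := hgXY (x % r) hmem
        rw [h1, h2] at this
        calc x = r * (x / r) + x % r := (Nat.div_add_mod x r).symm
          _ = r * (y / r) + y % r := by rw [this, ← hyx]
          _ = y := Nat.div_add_mod y r
      rwa [this]
    exact Finset.Subset.antisymm
      (key A B hA.2.2 hB.2.2 hT hfun)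
      (key B A hB.2.2 hA.2.2 hT.symm (fun i hi => (hfun i (hT.symm ▸ hi)).symm))

end CTAux

namespace CTAux2
open Finset CTAux

lemma modlem {r x a : ℕ} (ha : a < r) : (r * x + a) % r = a := by
  rw [add_comm, Nat.add_mul_mod_self_left, Nat.mod_eq_of_lt ha]

lemma le_RBs_card (r t s : ℕ) (hr : 0 < r) :
    r.choose s * (t / r) ^ s ≤ (RBs r t s).card := by
  classical
  rw [← card_Sig r (t / r) s]
  apply Finset.card_le_card_of_injOn
    (fun p => p.1.attach.image (fun a => r * p.2 a.1 a.2 + a.1))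
  · -- maps to
    rintro ⟨T, f⟩ hp
    rw [Sig, Finset.mem_coe, Finset.mem_sigma, Finset.mem_powersetCard, Finset.mem_pi] at hp
    obtain ⟨⟨hTr, hTs⟩, hf⟩ := hp
    dsimp only
    have hmod : ∀ a : {x // x ∈ T}, (r * f a.1 a.2 + a.1) % r = a.1 :=
      fun a => modlem (Finset.mem_range.1 (hTr a.2))
    have hinj : Set.InjOn (fun a : {x // x ∈ T} => r * f a.1 a.2 + a.1) ↑T.attach := by
      intro a _ b _ hab
      have := congrArg (· % r) hab
      simp only [hmod] at this
      exact Subtype.ext this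
    rw [Finset.mem_coe, mem_RBs]
    refine ⟨?_, ?_, ?_⟩
    · intro x hx
      rw [Finset.mem_image] at hx
      obtain ⟨a, _, rfl⟩ := hx
      have h1 : f a.1 a.2 < t / r := Finset.mem_range.1 (hf a.1 a.2)
      have h2 : (a : ℕ) < r := Finset.mem_range.1 (hTr a.2)
      have h3 : r * (t / r) ≤ t := Nat.mul_div_le t r
      have h4 : r * (f a.1 a.2 + 1) ≤ r * (t / r) := Nat.mul_le_mul_left r (by omega)
      have h5 : r * (f a.1 a.2 + 1) = r * f a.1 a.2 + r := by ring
      rw [Finset.mem_range]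
      omega
    · rw [Finset.card_image_of_injOn hinj, Finset.card_attach, hTs]
    · intro i hi j hj hij
      rw [Finset.mem_image] at hi hj
      obtain ⟨a, _, rfl⟩ := hi
      obtain ⟨b, _, rfl⟩ := hj
      rw [hmod, hmod]
      intro hab
      exact hij (by rw [Subtype.ext hab])
  · -- injective
    rintro ⟨T, f⟩ hp ⟨T', f'⟩ hp' hST
    simp only [Finset.mem_coe, Sig, Finset.mem_sigma, Finset.mem_powersetCard,
      Finset.mem_pi] at hp hp'
    obtain ⟨⟨hTr, hTs⟩, hf⟩ := hp
    obtain ⟨⟨hTr', hTs'⟩, hf'⟩ := hp'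
    dsimp only at hST
    have himg : ∀ (T₀ : Finset ℕ), T₀ ⊆ Finset.range r → ∀ (f₀ : ∀ a ∈ T₀, ℕ),
        (T₀.attach.image (fun a => r * f₀ a.1 a.2 + a.1)).image (· % r) = T₀ := by
      intro T₀ hT₀ f₀
      rw [Finset.image_image]
      ext i
      simp only [Finset.mem_image, Function.comp_apply]
      constructor
      · rintro ⟨a, _, rfl⟩
        rw [modlem (Finset.mem_range.1 (hT₀ a.2))]
        exact a.2
      · intro hi
        exact ⟨⟨i, hi⟩, Finset.mem_attach _ _, modlem (Finset.mem_range.1 (hT₀ hi))⟩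
    have hTT : T = T' := by
      rw [← himg T hTr f, ← himg T' hTr' f', hST]
    subst hTT
    have hff : f = f' := by
      funext a ha
      have hmem : r * f a ha + a ∈ T.attach.image (fun a => r * f a.1 a.2 + a.1) :=
        Finset.mem_image_of_mem _ (Finset.mem_attach _ ⟨a, ha⟩)
      rw [hST] at hmem
      rw [Finset.mem_image] at hmem
      obtain ⟨b, _, hb⟩ := hmem
      have har : a < r := Finset.mem_range.1 (hTr ha)
      have hbr : (b : ℕ) < r := Finset.mem_range.1 (hTr b.2)
      have hba : (b : ℕ) = a := by
        have := congrArg (· % r) hb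
        simp only [modlem har, modlem hbr] at this
        exact this
      have hb' : b = (⟨a, ha⟩ : {x // x ∈ T}) := Subtype.ext hba
      rw [hb'] at hb
      have hb2 : r * f' a ha + a = r * f a ha + a := hb
      exact (Nat.eq_of_mul_eq_mul_left hr (by omega)).symm
    rw [hff]
end CTAux2

namespace CTAux3

lemma pow_sub_pow_le (u v : ℝ) (hu : 0 ≤ u) (huv : u ≤ v) :
    ∀ k : ℕ, v ^ (k+1) - u ^ (k+1) ≤ (k+1) * (v - u) * v ^ k := by
  intro k
  induction k with
  | zero => simp
  | succ k ih =>
    have hv : 0 ≤ v := hu.trans huv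
    have hup : u ^ (k+1) ≤ v ^ (k+1) := pow_le_pow_left₀ hu huv _
    have h1 : v ^ (k+2) - u ^ (k+2) = v * (v ^ (k+1) - u ^ (k+1)) + u ^ (k+1) * (v - u) := by
      ring
    have h2 : v * (v ^ (k+1) - u ^ (k+1)) ≤ v * ((k+1) * (v - u) * v ^ k) :=
      mul_le_mul_of_nonneg_left ih hv
    have h3 : u ^ (k+1) * (v - u) ≤ v ^ (k+1) * (v - u) :=
      mul_le_mul_of_nonneg_right hup (by linarith)
    have h4 : v * ((k+1) * (v - u) * v ^ k) + v ^ (k+1) * (v - u)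
        = ((k:ℝ)+1+1) * (v - u) * v ^ (k+1) := by ring
    push_cast
    nlinarith [h1, h2, h3, h4]

lemma real_key (s : ℕ) (hs : 3 ≤ s) (a b K q mR : ℝ) (ha : 0 ≤ a) (hb : 1 ≤ b)
    (hq : 0 ≤ q) (hm : 1 ≤ mR) (hK1 : a * q ^ s ≤ K) (hK2 : K ≤ a * (q + 2) ^ s)
    (hm1 : b * q ^ 2 ≤ mR) (hm2 : mR ≤ b * (q + 2) ^ 2) :
    |K - (a / b ^ ((s : ℝ)/2)) * mR ^ ((s : ℝ)/2)|
      ≤ (2 * s * a * 3 ^ s) * mR ^ (((s : ℝ) - 1)/2) := by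
  have hb0 : (0:ℝ) < b := by linarith
  have hm0 : (0:ℝ) ≤ mR := by linarith
  set x := Real.sqrt (mR / b) with hxdef
  have hx0 : 0 ≤ x := Real.sqrt_nonneg _
  have hxq : q ≤ x := by
    rw [hxdef, show q = Real.sqrt (q^2) by rw [Real.sqrt_sq hq]]
    apply Real.sqrt_le_sqrt
    rw [le_div_iff₀ hb0]; nlinarith
  have hxq2 : x ≤ q + 2 := by
    rw [hxdef, show q + 2 = Real.sqrt ((q+2)^2) by rw [Real.sqrt_sq (by linarith)]]
    apply Real.sqrt_le_sqrt
    rw [div_le_iff₀ hb0]; nlinarith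
  have hxm : x ≤ Real.sqrt mR := by
    apply Real.sqrt_le_sqrt
    rw [div_le_iff₀ hb0]; nlinarith
  have h1m : 1 ≤ Real.sqrt mR := by
    rw [show (1:ℝ) = Real.sqrt 1 by simp]
    exact Real.sqrt_le_sqrt hm
  -- identity E1
  have hE1 : (a / b ^ ((s : ℝ)/2)) * mR ^ ((s : ℝ)/2) = a * x ^ s := by
    have hxs : x ^ s = (mR / b) ^ ((s : ℝ)/2) := by
      rw [hxdef, Real.sqrt_eq_rpow, ← Real.rpow_natCast ((mR/b) ^ ((1:ℝ)/2)) s,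
        ← Real.rpow_mul (by positivity)]
      ring_nf
    rw [hxs, Real.div_rpow hm0 (le_of_lt hb0)]
    ring
  have hE2 : (Real.sqrt mR) ^ (s - 1) = mR ^ (((s : ℝ) - 1)/2) := by
    rw [Real.sqrt_eq_rpow, ← Real.rpow_natCast (mR ^ ((1:ℝ)/2)) (s-1),
      ← Real.rpow_mul hm0]
    congr 1
    have : ((s - 1 : ℕ) : ℝ) = (s : ℝ) - 1 := by
      have : 1 ≤ s := by omega
      push_cast [this]; ring
    rw [this]; ring
  rw [hE1, ← hE2]
  -- main bounds
  obtain ⟨k, hk⟩ : ∃ k, s = k + 1 := ⟨s - 1, by omega⟩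
  have hk1 : s - 1 = k := by omega
  have hposx2 : (0:ℝ) ≤ x + 2 := by linarith
  have hub : K - a * x ^ s ≤ 2 * s * a * (x + 2) ^ (s-1) := by
    have h1 : K - a * x ^ s ≤ a * ((x+2) ^ s - x ^ s) := by
      have : (q+2)^s ≤ (x+2)^s := pow_le_pow_left₀ (by linarith) (by linarith) _
      nlinarith [hK2]
    have h2 : (x+2) ^ s - x ^ s ≤ (s:ℝ) * 2 * (x+2) ^ (s-1) := by
      rw [hk]
      simp only [Nat.add_sub_cancel]
      have := pow_sub_pow_le x (x+2) hx0 (by linarith) k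
      have h2' : ((k:ℝ)+1) * ((x+2) - x) * (x+2)^k = ((k:ℝ)+1) * 2 * (x+2)^k := by ring
      rw [h2'] at this
      push_cast
      linarith
    calc K - a * x ^ s ≤ a * ((x+2) ^ s - x ^ s) := h1
      _ ≤ a * ((s:ℝ) * 2 * (x+2) ^ (s-1)) := mul_le_mul_of_nonneg_left h2 ha
      _ = 2 * s * a * (x+2) ^ (s-1) := by ring
  have hlb : a * x ^ s - K ≤ 2 * s * a * (x + 2) ^ (s-1) := by
    have h1 : a * x ^ s - K ≤ a * (x ^ s - q ^ s) := by nlinarith [hK1]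
    have h2 : x ^ s - q ^ s ≤ (s:ℝ) * 2 * x ^ (s-1) := by
      rw [hk]
      simp only [Nat.add_sub_cancel]
      have := pow_sub_pow_le q x hq hxq k
      have hxk : ((k:ℝ)+1) * (x - q) * x^k ≤ ((k:ℝ)+1) * 2 * x^k := by
        have h0 : (0:ℝ) ≤ x ^ k := pow_nonneg hx0 _
        have hd1 : (x - q) * x ^ k ≤ 2 * x ^ k := mul_le_mul_of_nonneg_right (by linarith) h0
        have hd2 : (0:ℝ) ≤ (k:ℝ)+1 := by positivity
        calc ((k:ℝ)+1) * (x - q) * x^k = ((k:ℝ)+1) * ((x-q) * x^k) := by ring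
          _ ≤ ((k:ℝ)+1) * (2 * x^k) := mul_le_mul_of_nonneg_left hd1 hd2
          _ = ((k:ℝ)+1) * 2 * x^k := by ring
      push_cast
      linarith
    have h3 : x ^ (s-1) ≤ (x+2) ^ (s-1) := pow_le_pow_left₀ hx0 (by linarith) _
    calc a * x ^ s - K ≤ a * (x ^ s - q ^ s) := h1
      _ ≤ a * ((s:ℝ) * 2 * x ^ (s-1)) := mul_le_mul_of_nonneg_left h2 ha
      _ ≤ a * ((s:ℝ) * 2 * (x+2) ^ (s-1)) := by
          apply mul_le_mul_of_nonneg_left _ ha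
          have : (0:ℝ) ≤ (s:ℝ) * 2 := by positivity
          nlinarith
      _ = 2 * s * a * (x+2) ^ (s-1) := by ring
  have hfinal : (x + 2) ^ (s-1) ≤ 3 ^ s * (Real.sqrt mR) ^ (s-1) := by
    have h1 : x + 2 ≤ 3 * Real.sqrt mR := by linarith
    have h2 : (x+2) ^ (s-1) ≤ (3 * Real.sqrt mR) ^ (s-1) :=
      pow_le_pow_left₀ hposx2 h1 _
    have h3 : (3 * Real.sqrt mR) ^ (s-1) = 3 ^ (s-1) * (Real.sqrt mR) ^ (s-1) := by
      rw [mul_pow]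
    have h4 : (3:ℝ) ^ (s-1) ≤ 3 ^ s := by
      apply pow_le_pow_right₀ (by norm_num) (by omega)
    have h5 : (0:ℝ) ≤ (Real.sqrt mR) ^ (s-1) := pow_nonneg (Real.sqrt_nonneg _) _
    calc (x+2)^(s-1) ≤ (3 * Real.sqrt mR)^(s-1) := h2
      _ = 3^(s-1) * (Real.sqrt mR)^(s-1) := h3
      _ ≤ 3^s * (Real.sqrt mR)^(s-1) := mul_le_mul_of_nonneg_right h4 h5
  rw [abs_le]
  have hsa : (0:ℝ) ≤ 2 * s * a := by positivity
  have hchain : 2 * s * a * (x+2)^(s-1) ≤ 2 * s * a * (3 ^ s * (Real.sqrt mR) ^ (s-1)) :=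
    mul_le_mul_of_nonneg_left hfinal hsa
  constructor
  · have := hlb.trans hchain
    linarith [this]
  · have := hub.trans hchain
    linarith [this]
end CTAux3


namespace CTAux4
open Finset CTAux CTAux2 SimpleGraph

variable {r n m : ℕ}

lemma adj_of_lt (hr : 0 < r) (hn1 : (RBs r n 2).card ≤ m) {a b : ℕ}
    (ha : a < n) (hb : b < n) (hab : a ≠ b) (hmod : a % r ≠ b % r) :
    (colexTuran r m).Adj a b := by
  change a ≠ b ∧ ({a, b} : Finset ℕ) ∈ rpartiteColexInitial r 2 m
  refine ⟨hab, ?_⟩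
  simp only [rpartiteColexInitial, Set.mem_setOf_eq]
  refine ⟨Finset.card_pair hab, ?_, ?_⟩
  · intro i hi j hj hij
    simp only [Finset.mem_insert, Finset.mem_singleton] at hi hj
    rcases hi with rfl | rfl <;> rcases hj with rfl | rfl
    · exact absurd rfl hij
    · exact hmod
    · exact hmod.symm
    · exact absurd rfl hij
  · have hsub : {B : Finset ℕ | B.card = 2 ∧ IsRainbow r B ∧
        toColex B ≤ toColex ({a, b} : Finset ℕ)}
        ⊆ ↑(RBs r n 2) := by
      rintro B ⟨hB2, hBrb, hBle⟩
      have hlt : ∀ x ∈ B, x < n := by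
        refine Finset.Colex.forall_lt_mono hBle ?_
        intro x hx
        simp only [Finset.mem_insert, Finset.mem_singleton] at hx
        rcases hx with rfl | rfl <;> assumption
      rw [Finset.mem_coe, mem_RBs]
      exact ⟨fun x hx => Finset.mem_range.2 (hlt x hx), hB2, hBrb⟩
    calc Set.ncard {B : Finset ℕ | B.card = 2 ∧ IsRainbow r B ∧
          toColex B ≤ toColex ({a, b} : Finset ℕ)}
        ≤ Set.ncard (↑(RBs r n 2) : Set (Finset ℕ)) :=
          Set.ncard_le_ncard hsub (Finset.finite_toSet _)
      _ = (RBs r n 2).card := Set.ncard_coe_finset _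
      _ ≤ m := hn1

lemma lt_of_adj (hn2 : m < (RBs r (n+1) 2).card) {a b : ℕ}
    (h : (colexTuran r m).Adj a b) : a < n + 1 ∧ b < n + 1 ∧ a % r ≠ b % r := by
  obtain ⟨hab, hmem⟩ := (h : a ≠ b ∧ ({a, b} : Finset ℕ) ∈ rpartiteColexInitial r 2 m)
  simp only [rpartiteColexInitial, Set.mem_setOf_eq] at hmem
  obtain ⟨h2, hrb, hle⟩ := hmem
  have hmod : a % r ≠ b % r :=
    hrb a (Finset.mem_insert_self _ _) b
      (Finset.mem_insert_of_mem (Finset.mem_singleton_self _)) hab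
  have key : ∀ c ∈ ({a, b} : Finset ℕ), c < n + 1 := by
    by_contra hcon
    push_neg at hcon
    obtain ⟨c, hc, hcge⟩ := hcon
    have hsub2 : (↑(RBs r (n+1) 2) : Set (Finset ℕ)) ⊆
        {B : Finset ℕ | B.card = 2 ∧ IsRainbow r B ∧
          toColex B ≤ toColex ({a, b} : Finset ℕ)} := by
      intro B hB
      rw [Finset.mem_coe, mem_RBs] at hB
      obtain ⟨hBsub, hB2, hBrb⟩ := hB
      refine ⟨hB2, hBrb, le_of_lt ?_⟩
      rw [Finset.Colex.toColex_lt_toColex_iff_exists_forall_lt]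
      refine ⟨c, hc, ?_, ?_⟩
      · intro hcB
        have := Finset.mem_range.1 (hBsub hcB)
        omega
      · intro x hx _
        have := Finset.mem_range.1 (hBsub hx)
        omega
    have hfin : {B : Finset ℕ | B.card = 2 ∧ IsRainbow r B ∧
        toColex B ≤ toColex ({a, b} : Finset ℕ)}.Finite := by
      apply Set.Finite.subset (Finset.finite_toSet (RBs r (max a b + 1) 2))
      rintro B ⟨hB2, hBrb, hBle⟩
      have hlt : ∀ x ∈ B, x < max a b + 1 := by
        refine Finset.Colex.forall_lt_mono hBle ?_
        intro x hx
        simp only [Finset.mem_insert, Finset.mem_singleton] at hx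
        rcases hx with rfl | rfl
        · omega
        · omega
      rw [Finset.mem_coe, mem_RBs]
      exact ⟨fun x hx => Finset.mem_range.2 (hlt x hx), hB2, hBrb⟩
    have : (RBs r (n+1) 2).card ≤ m := by
      calc (RBs r (n+1) 2).card
          = Set.ncard (↑(RBs r (n+1) 2) : Set (Finset ℕ)) := (Set.ncard_coe_finset _).symm
        _ ≤ Set.ncard {B : Finset ℕ | B.card = 2 ∧ IsRainbow r B ∧
              toColex B ≤ toColex ({a, b} : Finset ℕ)} :=
            Set.ncard_le_ncard hsub2 hfin
        _ ≤ m := hle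
    omega
  exact ⟨key a (Finset.mem_insert_self _ _),
    key b (Finset.mem_insert_of_mem (Finset.mem_singleton_self _)), hmod⟩

lemma clique_sandwich (hr : 0 < r) {s : ℕ} (hs : 2 ≤ s)
    (hn1 : (RBs r n 2).card ≤ m) (hn2 : m < (RBs r (n+1) 2).card) :
    (↑(RBs r n s) : Set (Finset ℕ)) ⊆ {S : Finset ℕ | (colexTuran r m).IsNClique s S} ∧
    {S : Finset ℕ | (colexTuran r m).IsNClique s S} ⊆ (↑(RBs r (n+1) s) : Set (Finset ℕ)) := by
  constructor
  · intro S hS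
    rw [Finset.mem_coe, mem_RBs] at hS
    obtain ⟨hSsub, hSs, hSrb⟩ := hS
    refine ⟨?_, hSs⟩
    intro x hx y hy hxy
    exact adj_of_lt hr hn1 (Finset.mem_range.1 (hSsub hx)) (Finset.mem_range.1 (hSsub hy))
      hxy (hSrb x hx y hy hxy)
  · intro S hS
    obtain ⟨hclique, hcard⟩ := hS
    rw [Finset.mem_coe, mem_RBs]
    refine ⟨?_, hcard, ?_⟩
    · intro x hx
      obtain ⟨y, hy, hyx⟩ := Finset.exists_mem_ne (by omega : 1 < S.card) x
      have hadj := hclique hx hy (Ne.symm hyx)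
      exact Finset.mem_range.2 (lt_of_adj hn2 hadj).1
    · intro i hi j hj hij
      exact (lt_of_adj hn2 (hclique hi hj hij)).2.2

lemma cliqueCount_sandwich (hr : 0 < r) {s : ℕ} (hs : 2 ≤ s)
    (hn1 : (RBs r n 2).card ≤ m) (hn2 : m < (RBs r (n+1) 2).card) :
    (RBs r n s).card ≤ cliqueCount (colexTuran r m) s ∧
      cliqueCount (colexTuran r m) s ≤ (RBs r (n+1) s).card := by
  obtain ⟨hlow, hhigh⟩ := clique_sandwich hr hs hn1 hn2
  have hfin : {S : Finset ℕ | (colexTuran r m).IsNClique s S}.Finite :=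
    Set.Finite.subset (Finset.finite_toSet _) hhigh
  constructor
  · calc (RBs r n s).card = Set.ncard (↑(RBs r n s) : Set (Finset ℕ)) :=
        (Set.ncard_coe_finset _).symm
      _ ≤ cliqueCount (colexTuran r m) s := Set.ncard_le_ncard hlow hfin
  · calc cliqueCount (colexTuran r m) s
        ≤ Set.ncard (↑(RBs r (n+1) s) : Set (Finset ℕ)) :=
          Set.ncard_le_ncard hhigh (Finset.finite_toSet _)
      _ = (RBs r (n+1) s).card := Set.ncard_coe_finset _

end CTAux4

/-- **Proposition 2.1, asymptotic part**: `k_s(CT_r(m)) = c_{r,s} m^{s/2} + O(m^{(s-1)/2})`. -/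
theorem colexTuran_cliques_asymptotic (r s : ℕ) (hr : 2 ≤ r) (hs : 3 ≤ s) :
    ∃ C : ℝ, ∀ m : ℕ, 1 ≤ m →
      |(cliqueCount (colexTuran r m) s : ℝ) - cRS r s * (m : ℝ) ^ ((s : ℝ) / 2)|
        ≤ C * (m : ℝ) ^ (((s : ℝ) - 1) / 2) := by
  classical
  have hr0 : 0 < r := by omega
  refine ⟨2 * (s : ℝ) * (r.choose s : ℝ) * 3 ^ s, ?_⟩
  intro m hm
  -- find n
  have hex : ∃ t, m < (CTAux.RBs r t 2).card := by
    refine ⟨r * (m + 1), ?_⟩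
    have h1 := CTAux2.le_RBs_card r (r * (m + 1)) 2 hr0
    rw [Nat.mul_div_cancel_left _ hr0] at h1
    have h2 : 1 ≤ r.choose 2 := Nat.one_le_iff_ne_zero.2 (Nat.choose_pos hr).ne'
    nlinarith [h1, h2]
  set t0 := Nat.find hex with ht0def
  have ht0 : m < (CTAux.RBs r t0 2).card := Nat.find_spec hex
  have ht0pos : t0 ≠ 0 := by
    intro h0
    rw [h0] at ht0
    have : (CTAux.RBs r 0 2).card = 0 := by
      rw [Finset.card_eq_zero]
      ext A
      simp only [CTAux.mem_RBs, Finset.notMem_empty, iff_false, not_and]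
      intro hA hA2
      rw [Finset.range_zero, Finset.subset_empty] at hA
      subst hA
      simp at hA2
    omega
  set n := t0 - 1 with hndef
  have hn2 : m < (CTAux.RBs r (n + 1) 2).card := by
    have : n + 1 = t0 := by omega
    rw [this]; exact ht0
  have hn1 : (CTAux.RBs r n 2).card ≤ m := by
    by_contra hcon
    push_neg at hcon
    have := Nat.find_min hex (m := n) (by omega)
    omega
  -- sandwich
  obtain ⟨hK1n, hK2n⟩ := CTAux4.cliqueCount_sandwich hr0 (by omega : 2 ≤ s) hn1 hn2
  set q := n / r with hqdef
  set K := cliqueCount (colexTuran r m) s with hKdef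
  -- Nat bounds
  have hdivb : (n + 1) / r + 1 ≤ q + 2 := by
    have h1 : (n + 1) / r ≤ (n + r) / r := Nat.div_le_div_right (by omega)
    have h2 : (n + r) / r = n / r + 1 := Nat.add_div_right n hr0
    omega
  have hK1 : r.choose s * q ^ s ≤ K := le_trans (CTAux2.le_RBs_card r n s hr0) hK1n
  have hK2 : K ≤ r.choose s * (q + 2) ^ s := by
    refine le_trans hK2n (le_trans (CTAux.RBs_card_le r (n+1) s hr0) ?_)
    exact Nat.mul_le_mul_left _ (Nat.pow_le_pow_left hdivb s)
  have hm1 : r.choose 2 * q ^ 2 ≤ m := le_trans (CTAux2.le_RBs_card r n 2 hr0) hn1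
  have hm2 : m ≤ r.choose 2 * (q + 2) ^ 2 := by
    have := le_trans (CTAux.RBs_card_le r (n+1) 2 hr0)
      (Nat.mul_le_mul_left _ (Nat.pow_le_pow_left hdivb 2))
    omega
  -- to reals
  have hcast := CTAux3.real_key s hs (r.choose s : ℝ) (r.choose 2 : ℝ) (K : ℝ) (q : ℝ) (m : ℝ)
    (Nat.cast_nonneg _)
    (by exact_mod_cast Nat.one_le_iff_ne_zero.2 (Nat.choose_pos hr).ne')
    (Nat.cast_nonneg _)
    (by exact_mod_cast hm)
    (by exact_mod_cast hK1)
    (by exact_mod_cast hK2)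
    (by exact_mod_cast hm1)
    (by exact_mod_cast hm2)
  rw [cRS]
  exact hcast
end

section
/- Let s ≥ 3 be an integer. For every ε > 0 there exists m₀ such that every graph G with exactly m ≥ m₀ edges satisfies k_s(G) ≤ (1 + ε)·(2^{s/2}/s!)·m^{s/2}. -/
open SimpleGraph

universe u v

section Aux

open Finset
open scoped FinsetFamily
attribute [-instance] instDecidableEqFin

set_option maxHeartbeats 1600000 in
theorem cliqueCount_le_choose (s : ℕ) (hs : 3 ≤ s) {V : Type u} (G : SimpleGraph V) (m : ℕ)
    (hG : HasEdgeCount G m) :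
    cliqueCount G s ≤ (Nat.sqrt (2*m) + 2).choose s := by
  classical
  unfold cliqueCount
  obtain ⟨hfin, hm⟩ := hG
  set k : ℕ := Nat.sqrt (2*m) + 2 with hk
  -- the support is finite
  have hsupfin : {v : V | ∃ w, G.Adj v w}.Finite := by
    have hsub : {v : V | ∃ w, G.Adj v w} ⊆ ⋃ e ∈ G.edgeSet, {v | v ∈ e} := by
      rintro v ⟨w, hw⟩
      exact Set.mem_biUnion (G.mem_edgeSet.2 hw) (Sym2.mem_mk_left v w)
    refine Set.Finite.subset (Set.Finite.biUnion hfin ?_) hsub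
    intro e _
    induction e with
    | _ a b =>
      have h1 : {v : V | v ∈ s(a, b)} = {a, b} := by
        ext v; simp [Sym2.mem_iff]
      rw [h1]
      exact (Set.finite_singleton b).insert a
  set U : Finset V := hsupfin.toFinset with hU
  -- every s-clique is contained in U
  have hcliq_sub : ∀ S : Finset V, G.IsNClique s S → S ⊆ U := by
    intro S hS v hv
    have h1 : 1 < S.card := by rw [hS.2]; omega
    obtain ⟨w, hw, hwv⟩ := Finset.exists_mem_ne h1 v
    have : G.Adj v w := hS.1 hv hw (Ne.symm hwv)
    simp only [hU, Set.Finite.mem_toFinset]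
    exact ⟨w, this⟩
  -- the set of s-cliques is finite
  have hfins : {S : Finset V | G.IsNClique s S}.Finite := by
    refine Set.Finite.subset (U.powerset.finite_toSet) ?_
    intro S hS
    simpa [Finset.mem_powerset] using hcliq_sub S hS
  set K : Finset (Finset V) := hfins.toFinset with hKdef
  have hKcard : Set.ncard {S : Finset V | G.IsNClique s S} = K.card :=
    Set.ncard_eq_toFinset_card _ hfins
  rw [hKcard]
  rcases K.eq_empty_or_nonempty with hKe | hKne
  · simp [hKe]
  -- V is nonempty
  obtain ⟨S₀, hS₀⟩ := hKne
  have hS₀c : G.IsNClique s S₀ := by simpa [hKdef] using hS₀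
  have hS₀ne : S₀.Nonempty := by
    rw [← Finset.card_pos, hS₀c.2]; omega
  haveI : Nonempty V := ⟨hS₀ne.choose⟩
  -- pairs map into the edge finset image
  set g : Sym2 V → Finset V := Sym2.lift ⟨fun a b => {a, b}, fun a b => Finset.pair_comm a b⟩
    with hg
  have hpair : ∀ B : Finset V, B.card = 2 → (∀ a ∈ B, ∀ b ∈ B, a ≠ b → G.Adj a b) →
      B ∈ hfin.toFinset.image g := by
    intro B hB2 hBadj
    obtain ⟨a, b, hab, rfl⟩ := Finset.card_eq_two.1 hB2
    have hadj : G.Adj a b := hBadj a (by simp) b (by simp) hab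
    refine Finset.mem_image.2 ⟨s(a, b), ?_, rfl⟩
    simp [Set.Finite.mem_toFinset, hadj]
  have hedgecard : (hfin.toFinset.image g).card ≤ m := by
    calc (hfin.toFinset.image g).card ≤ hfin.toFinset.card := Finset.card_image_le
    _ = m := by rw [← hm, Set.ncard_eq_toFinset_card _ hfin]
  -- key numeric fact : m < k.choose 2
  have hmk : m < k.choose 2 := by
    have h1 : 2 * m < (Nat.sqrt (2*m) + 1) * (Nat.sqrt (2*m) + 1) := Nat.lt_succ_sqrt _
    have h2 : (Nat.sqrt (2*m) + 1) * (Nat.sqrt (2*m) + 1) ≤ (Nat.sqrt (2*m) + 2) * (Nat.sqrt (2*m) + 1) :=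
      Nat.mul_le_mul_right _ (by omega)
    have h3 : 2 * (k.choose 2) = (Nat.sqrt (2*m) + 1) * (Nat.sqrt (2*m) + 2) := by
      rw [Nat.choose_two_right]
      have h5 : k - 1 = Nat.sqrt (2*m) + 1 := by simp [hk]
      rw [h5, hk, mul_comm (Nat.sqrt (2*m) + 2)]
      exact Nat.mul_div_cancel' (Nat.even_mul_succ_self (Nat.sqrt (2*m) + 1)).two_dvd
    have h2' : (Nat.sqrt (2*m) + 1) * (Nat.sqrt (2*m) + 1) ≤ (Nat.sqrt (2*m) + 1) * (Nat.sqrt (2*m) + 2) :=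
      Nat.mul_le_mul_left _ (by omega)
    omega
  by_cases hsk : s ≤ k
  · -- main case, via Kruskal-Katona
    set n : ℕ := U.card + k with hn
    have hUn : Fintype.card ↥U ≤ n := by rw [Fintype.card_coe]; omega
    have hnpos : 0 < n := by omega
    set e := Fintype.equivFin ↥U with he
    set ψ : V → Fin n := fun v => if h : v ∈ U then Fin.castLE hUn (e ⟨v, h⟩) else ⟨0, hnpos⟩
      with hψ
    have hψinj : Set.InjOn ψ ↑U := by
      intro a ha b hb hab
      simp only [hψ, dif_pos (Finset.mem_coe.1 ha), dif_pos (Finset.mem_coe.1 hb)] at hab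
      exact congrArg Subtype.val (e.injective (Fin.castLE_injective hUn hab))
    set 𝒜 : Finset (Finset (Fin n)) := K.image (fun S => S.image ψ) with h𝒜
    have hsized : (𝒜 : Set (Finset (Fin n))).Sized s := by
      intro A hA
      obtain ⟨S, hS, rfl⟩ := Finset.mem_image.1 (Finset.mem_coe.1 hA)
      have hScl : G.IsNClique s S := by simpa [hKdef] using hS
      rw [Finset.card_image_of_injOn (hψinj.mono (by exact_mod_cast hcliq_sub S hScl))]
      exact hScl.2
    have h𝒜card : 𝒜.card = K.card := by
      apply Finset.card_image_of_injOn
      intro S₁ h₁ S₂ h₂ him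
      have hc₁ : G.IsNClique s S₁ := by simpa [hKdef] using h₁
      have hc₂ : G.IsNClique s S₂ := by simpa [hKdef] using h₂
      have him' : S₁.image ψ = S₂.image ψ := him
      apply Finset.ext
      intro a
      constructor
      · intro ha
        have : ψ a ∈ S₂.image ψ := him' ▸ Finset.mem_image_of_mem ψ ha
        obtain ⟨b, hb, hba⟩ := Finset.mem_image.1 this
        rwa [← hψinj (hcliq_sub _ hc₂ hb) (hcliq_sub _ hc₁ ha) hba]
      · intro ha
        have : ψ a ∈ S₁.image ψ := him'.symm ▸ Finset.mem_image_of_mem ψ ha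
        obtain ⟨b, hb, hba⟩ := Finset.mem_image.1 this
        rwa [← hψinj (hcliq_sub _ hc₁ hb) (hcliq_sub _ hc₂ ha) hba]
    -- shadow bound
    set ρ : Fin n → V := Function.invFunOn ψ ↑U with hρ
    have hρψ : ∀ v ∈ U, ρ (ψ v) = v := fun v hv => hψinj.leftInvOn_invFunOn hv
    have hshadow : #(∂^[s - 2] 𝒜) ≤ m := by
      refine le_trans (Finset.card_le_card_of_injOn (fun B => B.image ρ) ?_ ?_) hedgecard
      · -- maps into edge pairs
        intro B hB
        obtain ⟨A, hA, hBA, hsd⟩ := Finset.mem_shadow_iterate_iff_exists_sdiff.1 hB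
        obtain ⟨S, hS, rfl⟩ := Finset.mem_image.1 hA
        have hScl : G.IsNClique s S := by simpa [hKdef] using hS
        have hSU : ↑S ⊆ (↑U : Set V) := by exact_mod_cast hcliq_sub S hScl
        have hAcard : (S.image ψ).card = s := by
          rw [Finset.card_image_of_injOn (hψinj.mono hSU)]; exact hScl.2
        have hBcard : B.card = 2 := by
          have h1 := Finset.card_sdiff_of_subset hBA
          have h2 := Finset.card_le_card hBA
          omega
        have hBsub : B.image ρ ⊆ S := by
          intro x hx
          obtain ⟨y, hy, rfl⟩ := Finset.mem_image.1 hx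
          obtain ⟨v, hv, rfl⟩ := Finset.mem_image.1 (hBA hy)
          rwa [hρψ v (hcliq_sub S hScl hv)]
        have hcard2 : (B.image ρ).card = 2 := by
          apply le_antisymm (hBcard ▸ Finset.card_image_le)
          have : B = (B.image ρ).image ψ := by
            apply Finset.ext
            intro x
            constructor
            · intro hx
              obtain ⟨v, hv, rfl⟩ := Finset.mem_image.1 (hBA hx)
              exact Finset.mem_image.2 ⟨ρ (ψ v), Finset.mem_image_of_mem ρ hx,
                by rw [hρψ v (hcliq_sub S hScl hv)]⟩
            · intro hx
              obtain ⟨y, hy, rfl⟩ := Finset.mem_image.1 hx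
              obtain ⟨z, hz, rfl⟩ := Finset.mem_image.1 hy
              obtain ⟨v, hv, rfl⟩ := Finset.mem_image.1 (hBA hz)
              rwa [hρψ v (hcliq_sub S hScl hv)]
          calc 2 = B.card := hBcard.symm
          _ = ((B.image ρ).image ψ).card := by rw [← this]
          _ ≤ (B.image ρ).card := Finset.card_image_le
        refine hpair _ hcard2 ?_
        intro a ha b hb hab
        exact hScl.1 (hBsub ha) (hBsub hb) hab
      · -- injective
        intro B₁ hB₁ B₂ hB₂ him
        have key : ∀ B ∈ ∂^[s - 2] 𝒜, (B.image ρ).image ψ = B := by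
          intro B hB
          obtain ⟨A, hA, hBA, _⟩ := Finset.mem_shadow_iterate_iff_exists_sdiff.1 hB
          obtain ⟨S, hS, rfl⟩ := Finset.mem_image.1 hA
          have hScl : G.IsNClique s S := by simpa [hKdef] using hS
          apply Finset.ext
          intro x
          constructor
          · intro hx
            obtain ⟨y, hy, rfl⟩ := Finset.mem_image.1 hx
            obtain ⟨z, hz, rfl⟩ := Finset.mem_image.1 hy
            obtain ⟨v, hv, rfl⟩ := Finset.mem_image.1 (hBA hz)
            rwa [hρψ v (hcliq_sub S hScl hv)]
          · intro hx
            obtain ⟨v, hv, rfl⟩ := Finset.mem_image.1 (hBA hx)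
            exact Finset.mem_image.2 ⟨ρ (ψ v), Finset.mem_image_of_mem ρ hx,
              by rw [hρψ v (hcliq_sub S hScl hv)]⟩
        have him' : B₁.image ρ = B₂.image ρ := him
        rw [← key B₁ hB₁, ← key B₂ hB₂, him']
    -- apply Kruskal-Katona
    by_contra hcon
    push_neg at hcon
    have hkk := Finset.kruskal_katona_lovasz_form (i := s - 2) (r := s) (k := k) (n := n)
      (by omega) hsk (by omega) hsized (by omega)
    have : s - (s - 2) = 2 := by omega
    rw [this] at hkk
    have := le_trans hkk hshadow
    omega
  · -- k < s : no s-clique can exist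
    exfalso
    push_neg at hsk
    -- S₀ is an s-clique, so it has at least C(s,2) edges, contradiction with m < C(k,2) ≤ C(s,2)
    have hsub2 : S₀.powersetCard 2 ⊆ hfin.toFinset.image g := by
      intro B hB
      rw [Finset.mem_powersetCard] at hB
      refine hpair B hB.2 ?_
      intro a ha b hb hab
      exact hS₀c.1 (hB.1 ha) (hB.1 hb) hab
    have h1 : s.choose 2 ≤ m := by
      calc s.choose 2 = (S₀.powersetCard 2).card := by
            rw [Finset.card_powersetCard, hS₀c.2]
      _ ≤ (hfin.toFinset.image g).card := Finset.card_le_card hsub2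
      _ ≤ m := hedgecard
    have h2 : k.choose 2 ≤ s.choose 2 := Nat.choose_le_choose 2 (by omega)
    omega

theorem analytic (s : ℕ) (hs : 3 ≤ s) (ε : ℝ) (hε : 0 < ε) :
    ∃ m₀ : ℕ, ∀ m : ℕ, m₀ ≤ m →
      (((Nat.sqrt (2*m) + 2).choose s : ℝ))
        ≤ (1 + ε) * ((2 : ℝ) ^ ((s : ℝ) / 2) / (s.factorial : ℝ)) * (m : ℝ) ^ ((s : ℝ) / 2) := by
  have hsR : (0:ℝ) < s := by positivity
  set c : ℝ := (1 + ε) ^ ((s : ℝ)⁻¹) with hc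
  have h1ε : (1:ℝ) < 1 + ε := by linarith
  have hc1 : 1 < c := by
    rw [hc]
    exact Real.one_lt_rpow_iff_of_pos (by linarith) |>.2 (Or.inl ⟨h1ε, by positivity⟩)
  have hcs : c ^ s = 1 + ε := by
    rw [hc, ← Real.rpow_natCast ((1+ε) ^ ((s:ℝ)⁻¹)) s, ← Real.rpow_mul (by linarith),
      inv_mul_cancel₀ (ne_of_gt hsR), Real.rpow_one]
  refine ⟨⌈(2 / (c - 1)) ^ 2⌉₊ + 1, fun m hm => ?_⟩
  have hmR : ((2 / (c - 1)) ^ 2 : ℝ) ≤ (2 * m : ℝ) := by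
    have h1 : ((2 / (c - 1)) ^ 2 : ℝ) ≤ ⌈(2 / (c - 1)) ^ 2⌉₊ := Nat.le_ceil _
    have h2 : (⌈(2 / (c - 1)) ^ 2⌉₊ : ℝ) ≤ m := by exact_mod_cast le_trans (by omega) hm
    nlinarith [Nat.cast_nonneg (α := ℝ) m]
  have hsq : 2 / (c - 1) ≤ Real.sqrt (2 * m) := Real.le_sqrt_of_sq_le hmR
  -- k ≤ c * sqrt(2m)
  have hkle : ((Nat.sqrt (2*m) + 2 : ℕ) : ℝ) ≤ c * Real.sqrt (2 * m) := by
    have h1 : ((Nat.sqrt (2*m) : ℕ) : ℝ) ≤ Real.sqrt (2 * m) := by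
      apply Real.le_sqrt_of_sq_le
      exact_mod_cast Nat.sqrt_le' (2*m)
    have h2 : (2:ℝ) ≤ (c - 1) * Real.sqrt (2 * m) := by
      rw [div_le_iff₀ (by linarith : (0:ℝ) < c - 1)] at hsq
      linarith [hsq]
    push_cast
    nlinarith
  have hk0 : (0:ℝ) ≤ ((Nat.sqrt (2*m) + 2 : ℕ) : ℝ) := Nat.cast_nonneg _
  have hpow : ((Nat.sqrt (2*m) + 2 : ℕ) : ℝ) ^ s ≤ (1 + ε) * Real.sqrt (2 * m) ^ s := by
    calc ((Nat.sqrt (2*m) + 2 : ℕ) : ℝ) ^ s ≤ (c * Real.sqrt (2 * m)) ^ s :=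
          pow_le_pow_left₀ hk0 hkle s
    _ = c ^ s * Real.sqrt (2 * m) ^ s := mul_pow _ _ _
    _ = (1 + ε) * Real.sqrt (2 * m) ^ s := by rw [hcs]
  have hsqrtpow : Real.sqrt (2 * m) ^ s = (2:ℝ) ^ ((s:ℝ)/2) * (m:ℝ) ^ ((s:ℝ)/2) := by
    have hm0 : (0:ℝ) ≤ 2 * m := by positivity
    rw [Real.sqrt_eq_rpow, ← Real.rpow_natCast ((2*(m:ℝ)) ^ ((1:ℝ)/2)) s,
      ← Real.rpow_mul hm0]
    rw [show (1:ℝ)/2 * (s:ℕ) = (s:ℝ)/2 by ring]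
    exact Real.mul_rpow (by norm_num) (Nat.cast_nonneg m)
  calc (((Nat.sqrt (2*m) + 2).choose s : ℕ) : ℝ)
      ≤ ((Nat.sqrt (2*m) + 2 : ℕ) : ℝ) ^ s / (s.factorial : ℝ) := Nat.choose_le_pow_div s _
    _ ≤ ((1 + ε) * Real.sqrt (2 * m) ^ s) / (s.factorial : ℝ) := by
        apply div_le_div_of_nonneg_right ?_ ?_ |>.trans_eq rfl
        · exact hpow
        · positivity
    _ = (1 + ε) * ((2 : ℝ) ^ ((s : ℝ) / 2) / (s.factorial : ℝ)) * (m : ℝ) ^ ((s : ℝ) / 2) := by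
        rw [hsqrtpow]; ring


end Aux

/-- **Corollary 2.4**: for `s ≥ 3`, every graph with `m` edges has at most
`(1 + o(1)) (2^{s/2}/s!) m^{s/2}` copies of `K_s`. -/
theorem cliques_upper_bound (s : ℕ) (hs : 3 ≤ s) (ε : ℝ) (hε : 0 < ε) :
    ∃ m₀ : ℕ, ∀ m : ℕ, m₀ ≤ m → ∀ (V : Type u) (G : SimpleGraph V),
      HasEdgeCount G m →
      (cliqueCount G s : ℝ)
        ≤ (1 + ε) * ((2 : ℝ) ^ ((s : ℝ) / 2) / (s.factorial : ℝ)) * (m : ℝ) ^ ((s : ℝ) / 2) := by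
  obtain ⟨m₀, hm₀⟩ := analytic s hs ε hε
  refine ⟨m₀, fun m hm V G hG => ?_⟩
  calc (cliqueCount G s : ℝ)
      ≤ (((Nat.sqrt (2*m) + 2).choose s : ℕ) : ℝ) := by
        exact_mod_cast cliqueCount_le_choose s hs G m hG
    _ ≤ _ := hm₀ m hm
end

section
/- For all integers r ≥ 2 and t ≥ 1 and every real ε > 0, there exists n₀ such that every graph G on n ≥ n₀ vertices with e(G) ≥ t_r(n) + ε·n² contains a subgraph isomorphic to K_{r+1}[t]. -/
open SimpleGraph

universe u v

open Finset

section Helpers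

variable {V : Type u} [Fintype V] [DecidableEq V]

/-- Count of `M`-subsets containing a fixed set `K` is at most `C(n, M - |K|)`. -/
lemma card_supersets_le (K : Finset V) (M : ℕ) :
    #((Finset.univ.powersetCard M).filter (fun S => K ⊆ S)) ≤
      (Fintype.card V).choose (M - K.card) := by
  classical
  have h := Finset.card_le_card_of_injOn (fun S => S \ K)
    (s := (Finset.univ.powersetCard M).filter (fun S => K ⊆ S))
    (t := Finset.univ.powersetCard (M - K.card)) ?_ ?_
  · simpa [Finset.card_powersetCard] using h
  · intro S hS
    simp only [Finset.mem_coe, Finset.mem_filter, Finset.mem_powersetCard] at hS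
    obtain ⟨⟨-, hcard⟩, hK⟩ := hS
    simp only [Finset.mem_coe, Finset.mem_powersetCard]
    exact ⟨Finset.subset_univ _, by rw [Finset.card_sdiff_of_subset hK, hcard]⟩
  · intro S hS S' hS' h
    simp only [Finset.coe_filter, Set.mem_setOf_eq, Finset.mem_powersetCard] at hS hS'
    have : S \ K ∪ K = S' \ K ∪ K := by simp only at h; rw [h]
    rwa [Finset.sdiff_union_of_subset hS.2, Finset.sdiff_union_of_subset hS'.2] at this

/-- Count of `M`-subsets containing a fixed set `K` is at least `C(n - |K|, M - |K|)`. -/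
lemma card_supersets_ge (K : Finset V) (M : ℕ) (hKM : K.card ≤ M) :
    (Fintype.card V - K.card).choose (M - K.card) ≤
      #((Finset.univ.powersetCard M).filter (fun S => K ⊆ S)) := by
  classical
  have h := Finset.card_le_card_of_injOn (fun B => B ∪ K)
    (s := (Finset.univ \ K).powersetCard (M - K.card))
    (t := (Finset.univ.powersetCard M).filter (fun S => K ⊆ S)) ?_ ?_
  · have hc : #((Finset.univ \ K).powersetCard (M - K.card))
        = (Fintype.card V - K.card).choose (M - K.card) := by
      rw [Finset.card_powersetCard, Finset.card_sdiff_of_subset (Finset.subset_univ K),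
        Finset.card_univ]
    omega
  · intro B hB
    simp only [Finset.mem_coe, Finset.mem_powersetCard] at hB
    obtain ⟨hBs, hBcard⟩ := hB
    have hdisj : Disjoint B K := by
      refine Finset.disjoint_left.2 fun a haB haK => ?_
      have := hBs haB
      simp only [Finset.mem_sdiff, Finset.mem_univ, true_and] at this
      exact this haK
    simp only [Finset.mem_coe, Finset.mem_filter, Finset.mem_powersetCard]
    refine ⟨⟨Finset.subset_univ _, ?_⟩, Finset.subset_union_right⟩
    rw [Finset.card_union_of_disjoint hdisj, hBcard]
    omega
  · intro B hB B' hB' h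
    simp only [Finset.coe_filter, Set.mem_setOf_eq, Finset.mem_coe,
      Finset.mem_powersetCard] at hB hB'
    have hd : Disjoint B K := by
      refine Finset.disjoint_left.2 fun a haB haK => ?_
      have := hB.1 haB
      simp only [Finset.mem_sdiff, Finset.mem_univ, true_and] at this
      exact this haK
    have hd' : Disjoint B' K := by
      refine Finset.disjoint_left.2 fun a haB haK => ?_
      have := hB'.1 haB
      simp only [Finset.mem_sdiff, Finset.mem_univ, true_and] at this
      exact this haK
    have : (B ∪ K) \ K = (B' ∪ K) \ K := by simp only at h; rw [h]
    rwa [Finset.union_sdiff_cancel_right hd, Finset.union_sdiff_cancel_right hd'] at this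

/-- `C(n, M-j) * (n-M)^j ≤ C(n, M) * M^j`. -/
lemma choose_sub_mul_pow_le (n M j : ℕ) (hj : j ≤ M) (hM : M ≤ n) :
    n.choose (M - j) * (n - M) ^ j ≤ n.choose M * M ^ j := by
  induction j with
  | zero => simp
  | succ j ih =>
    have hj' : j ≤ M := by omega
    have key : n.choose (M - (j+1)) * (n - M) ≤ n.choose (M - j) * M := by
      have h1 : n.choose (M - (j+1)) * (n - (M - (j+1))) = n.choose (M - j) * (M - j) := by
        have := Nat.choose_succ_right_eq n (M - (j+1))
        have hMj : M - (j+1) + 1 = M - j := by omega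
        rw [hMj] at this
        omega
      have h2 : n.choose (M - (j+1)) * (n - M) ≤ n.choose (M - (j+1)) * (n - (M - (j+1))) :=
        Nat.mul_le_mul_left _ (by omega)
      have h3 : n.choose (M - j) * (M - j) ≤ n.choose (M - j) * M :=
        Nat.mul_le_mul_left _ (by omega)
      omega
    calc n.choose (M - (j+1)) * (n - M) ^ (j+1)
        = (n.choose (M - (j+1)) * (n - M)) * (n - M) ^ j := by ring
      _ ≤ (n.choose (M - j) * M) * (n - M) ^ j := Nat.mul_le_mul_right _ key
      _ = M * (n.choose (M - j) * (n - M) ^ j) := by ring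
      _ ≤ M * (n.choose M * M ^ j) := Nat.mul_le_mul_left _ (ih hj')
      _ = n.choose M * M ^ (j+1) := by ring

/-- `C(n,M) * M * (M-1) = C(n-2, M-2) * n * (n-1)` for `2 ≤ M ≤ n`. -/
lemma choose_two_identity (n M : ℕ) (hM : 2 ≤ M) (hMn : M ≤ n) :
    n.choose M * (M * (M - 1)) = (n - 2).choose (M - 2) * (n * (n - 1)) := by
  obtain ⟨m, rfl⟩ : ∃ m, M = m + 2 := ⟨M - 2, by omega⟩
  obtain ⟨p, rfl⟩ : ∃ p, n = p + 2 := ⟨n - 2, by omega⟩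
  have h1 := Nat.add_one_mul_choose_eq (p + 1) (m + 1)
  have h2 := Nat.add_one_mul_choose_eq p m
  -- h1 : (p+2) * (p+1).choose (m+1) = (p+2).choose (m+2) * (m+2)
  -- h2 : (p+1) * p.choose m = (p+1).choose (m+1) * (m+1)
  have : (p+2) * ((p+1) * p.choose m) = (p+2) * ((p+1).choose (m+1) * (m+1)) := by rw [h2]
  simp only [show p + 2 - 2 = p by omega, show m + 2 - 2 = m by omega,
    show m + 2 - 1 = m + 1 by omega, show p + 2 - 1 = p + 1 by omega]
  nlinarith [h1, h2]

end Helpers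

section Edges2

variable {V : Type u} [Fintype V] [DecidableEq V]

/-- The clique predicate on finsets, in explicit form. -/
def CliqueOn (G : SimpleGraph V) (A : Finset V) : Prop :=
  ∀ a ∈ A, ∀ b ∈ A, a ≠ b → G.Adj a b

instance (G : SimpleGraph V) [DecidableRel G.Adj] : DecidablePred (CliqueOn G) := by
  unfold CliqueOn; infer_instance

/-- The set of edges of `G`, as 2-element subsets. -/
def edges2 (G : SimpleGraph V) [DecidableRel G.Adj] : Finset (Finset V) :=
  (Finset.univ.powersetCard 2).filter (CliqueOn G)

lemma edges2_card (G : SimpleGraph V) [DecidableRel G.Adj] :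
    #(edges2 G) = #G.edgeFinset := by
  refine (Finset.card_bij (fun e _ => Finset.univ.filter (· ∈ e)) ?_ ?_ ?_).symm
  · intro e he
    induction e with
    | _ a b =>
      rw [SimpleGraph.mem_edgeFinset, SimpleGraph.mem_edgeSet] at he
      have hab : a ≠ b := he.ne
      have hset : Finset.univ.filter (· ∈ s(a, b)) = {a, b} := by
        ext x
        simp [Sym2.mem_iff]
      show Finset.univ.filter (· ∈ s(a, b)) ∈ edges2 G
      rw [hset]
      simp only [edges2, Finset.mem_filter, Finset.mem_powersetCard]
      refine ⟨⟨Finset.subset_univ _, Finset.card_pair hab⟩, ?_⟩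
      intro x hx y hy hxy
      simp only [Finset.mem_insert, Finset.mem_singleton] at hx hy
      rcases hx with rfl | rfl <;> rcases hy with rfl | rfl
      · exact absurd rfl hxy
      · exact he
      · exact he.symm
      · exact absurd rfl hxy
  · intro e₁ h₁ e₂ h₂ heq
    induction e₁ with
    | _ a b =>
      induction e₂ with
      | _ c d =>
        rw [SimpleGraph.mem_edgeFinset, SimpleGraph.mem_edgeSet] at h₁ h₂
        have hab : a ≠ b := h₁.ne
        have hmem : ∀ x : V, x ∈ s(a, b) ↔ x ∈ s(c, d) := by
          intro x
          have := Finset.ext_iff.1 heq x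
          simpa using this
        have ha := (hmem a).1 (by simp)
        have hb := (hmem b).1 (by simp)
        have hc := (hmem c).2 (by simp)
        rw [Sym2.mem_iff] at ha hb hc
        rw [Sym2.eq_iff]
        rcases ha with h1 | h1
        · refine Or.inl ⟨h1, ?_⟩
          rcases hb with h2 | h2
          · exact absurd (h1.trans h2.symm) hab
          · exact h2
        · refine Or.inr ⟨h1, ?_⟩
          rcases hb with h2 | h2
          · exact h2
          · exact absurd (h1.trans h2.symm) hab
  · intro A hA
    simp only [edges2, Finset.mem_filter, Finset.mem_powersetCard] at hA
    obtain ⟨⟨-, hcard⟩, hcl⟩ := hA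
    obtain ⟨a, b, hab, rfl⟩ := Finset.card_eq_two.1 hcard
    have hadj : G.Adj a b := hcl a (by simp) b (by simp) hab
    refine ⟨s(a, b), ?_, ?_⟩
    · rw [SimpleGraph.mem_edgeFinset, SimpleGraph.mem_edgeSet]; exact hadj
    · ext x; simp [Sym2.mem_iff]

/-- Edges within `S` are at most `C(|S|, 2)`. -/
lemma edges2_within_le (G : SimpleGraph V) [DecidableRel G.Adj] (S : Finset V) :
    #((edges2 G).filter (· ⊆ S)) ≤ (#S).choose 2 := by
  have : (edges2 G).filter (· ⊆ S) ⊆ S.powersetCard 2 := by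
    intro A hA
    simp only [edges2, Finset.mem_filter, Finset.mem_powersetCard] at hA ⊢
    exact ⟨hA.2, hA.1.1.2⟩
  simpa [Finset.card_powersetCard] using Finset.card_le_card this

/-- Double counting: the total count of edges inside `M`-subsets. -/
lemma sum_edges_within_ge (G : SimpleGraph V) [DecidableRel G.Adj] (M : ℕ) (hM : 2 ≤ M) :
    #(edges2 G) * (Fintype.card V - 2).choose (M - 2) ≤
      ∑ S ∈ Finset.univ.powersetCard M, #((edges2 G).filter (· ⊆ S)) := by
  have hswap : ∑ S ∈ Finset.univ.powersetCard M, #((edges2 G).filter (· ⊆ S)) =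
      ∑ A ∈ edges2 G, #((Finset.univ.powersetCard M).filter (fun S => A ⊆ S)) := by
    simp only [Finset.card_filter]
    exact Finset.sum_comm
  rw [hswap]
  calc #(edges2 G) * (Fintype.card V - 2).choose (M - 2)
      = ∑ _A ∈ edges2 G, (Fintype.card V - 2).choose (M - 2) := by
        rw [Finset.sum_const, smul_eq_mul]
    _ ≤ _ := by
        refine Finset.sum_le_sum fun A hA => ?_
        have hcard : A.card = 2 := by
          simp only [edges2, Finset.mem_filter, Finset.mem_powersetCard] at hA
          exact hA.1.2
        have := card_supersets_ge (V := V) A M (by omega)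
        rwa [hcard] at this

end Edges2

section TuranTransfer

variable {V : Type u} [Fintype V] [DecidableEq V]

/-- If `S` spans more edges than the Turán number, it contains an `(r+1)`-clique. -/
lemma clique_of_dense_subset (G : SimpleGraph V) [DecidableRel G.Adj] {r M : ℕ}
    (hr : 0 < r) (hM : 0 < M) (S : Finset V) (hS : #S = M)
    (h : #(turanGraph M r).edgeFinset + 1 ≤ #((edges2 G).filter (· ⊆ S))) :
    ∃ A, A ⊆ S ∧ #A = r + 1 ∧ CliqueOn G A := by
  by_contra hno
  push_neg at hno
  have hScard : Fintype.card {x // x ∈ S} = M := by rw [Fintype.card_coe, hS]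
  let φ : {x // x ∈ S} ≃ Fin M := Fintype.equivFinOfCardEq hScard
  let H : SimpleGraph (Fin M) := G.comap (fun x => ((φ.symm x : {x // x ∈ S}) : V))
  letI : DecidableRel H.Adj := fun x y => ‹DecidableRel G.Adj› _ _
  have hHfree : H.CliqueFree (r + 1) := by
    intro K hK
    have hinj : Function.Injective (fun x : Fin M => ((φ.symm x : {x // x ∈ S}) : V)) :=
      Subtype.coe_injective.comp φ.symm.injective
    refine hno (K.image (fun x => ((φ.symm x : {x // x ∈ S}) : V))) ?_ ?_ ?_
    · intro v hv
      simp only [Finset.mem_image] at hv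
      obtain ⟨x, -, rfl⟩ := hv
      exact (φ.symm x).2
    · rw [Finset.card_image_of_injective _ hinj, hK.2]
    · intro a ha b hb hab
      simp only [Finset.mem_image] at ha hb
      obtain ⟨x, hx, rfl⟩ := ha
      obtain ⟨y, hy, rfl⟩ := hb
      have hxy : x ≠ y := fun hxy => hab (by rw [hxy])
      exact hK.1 (by exact hx) (by exact hy) hxy
  have hTuran : #H.edgeFinset ≤ #(turanGraph M r).edgeFinset :=
    (SimpleGraph.isTuranMaximal_turanGraph (n := M) hr).2 hHfree
  -- now the injection from edges of G within S into edges of H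
  let ψ : V → Fin M := fun v => if hv : v ∈ S then φ ⟨v, hv⟩ else ⟨0, hM⟩
  have hψS : ∀ v ∈ S, ∀ w ∈ S, ψ v = ψ w → v = w := by
    intro v hv w hw hvw
    simp only [ψ, dif_pos hv, dif_pos hw] at hvw
    have := φ.injective hvw
    exact Subtype.mk_eq_mk.1 this
  have hψval : ∀ v (hv : v ∈ S), ((φ.symm (ψ v) : {x // x ∈ S}) : V) = v := by
    intro v hv
    simp only [ψ, dif_pos hv, Equiv.symm_apply_apply]
  have hcard : #((edges2 G).filter (· ⊆ S)) ≤ #(edges2 H) := by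
    refine Finset.card_le_card_of_injOn (fun A => A.image ψ) ?_ ?_
    · intro A hA
      simp only [Finset.mem_coe, Finset.mem_filter, edges2, Finset.mem_powersetCard] at hA ⊢
      obtain ⟨⟨⟨-, hA2⟩, hAcl⟩, hAS⟩ := hA
      have himg : #(A.image ψ) = 2 := by
        rw [Finset.card_image_of_injOn, hA2]
        intro v hv w hw
        exact hψS v (hAS hv) w (hAS hw)
      refine ⟨⟨Finset.subset_univ _, himg⟩, ?_⟩
      intro x hx y hy hxy
      simp only [Finset.mem_image] at hx hy
      obtain ⟨u, hu, rfl⟩ := hx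
      obtain ⟨w, hw, rfl⟩ := hy
      have huw : u ≠ w := fun h => hxy (by rw [h])
      have hadj : G.Adj u w := hAcl u hu w hw huw
      show G.Adj ((fun x => ((φ.symm x : {x // x ∈ S}) : V)) (ψ u))
        ((fun x => ((φ.symm x : {x // x ∈ S}) : V)) (ψ w))
      simp only
      rwa [hψval u (hAS hu), hψval w (hAS hw)]
    · intro A hA A' hA' heq
      simp only [Finset.coe_filter, Set.mem_setOf_eq] at hA hA'
      simp only at heq
      ext a
      constructor
      · intro ha
        have : ψ a ∈ A'.image ψ := by rw [← heq]; exact Finset.mem_image_of_mem _ ha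
        simp only [Finset.mem_image] at this
        obtain ⟨a', ha', hval⟩ := this
        rwa [hψS a' (hA'.2 ha') a (hA.2 ha) hval] at ha'
      · intro ha
        have : ψ a ∈ A.image ψ := by rw [heq]; exact Finset.mem_image_of_mem _ ha
        simp only [Finset.mem_image] at this
        obtain ⟨a', ha', hval⟩ := this
        rwa [hψS a' (hA.2 ha') a (hA'.2 ha) hval] at ha'
  rw [edges2_card H] at hcard
  omega

end TuranTransfer

section TuranCount

lemma class_card_le (n r a : ℕ) (hr : 0 < r) :
    #((Finset.range n).filter (fun w => w % r = a)) ≤ n / r + 1 := by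
  have := Finset.card_le_card_of_injOn (fun w => w / r)
    (s := (Finset.range n).filter (fun w => w % r = a))
    (t := Finset.range (n / r + 1)) ?_ ?_
  · simpa using this
  · intro w hw
    simp only [Finset.mem_coe, Finset.mem_filter, Finset.mem_range] at hw ⊢
    have : w / r ≤ n / r := Nat.div_le_div_right (le_of_lt hw.1)
    omega
  · intro w₁ h₁ w₂ h₂ heq
    simp only [Finset.coe_filter, Set.mem_setOf_eq, Finset.mem_range] at h₁ h₂
    simp only at heq
    have e₁ := Nat.div_add_mod w₁ r
    have e₂ := Nat.div_add_mod w₂ r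
    rw [heq] at e₁
    omega

lemma class_card_ge (n r a : ℕ) (hr : 0 < r) (ha : a < r) :
    n / r ≤ #((Finset.range n).filter (fun w => w % r = a)) := by
  have := Finset.card_le_card_of_injOn (fun j => r * j + a)
    (s := Finset.range (n / r)) (t := (Finset.range n).filter (fun w => w % r = a)) ?_ ?_
  · simpa using this
  · intro j hj
    simp only [Finset.mem_coe, Finset.mem_range] at hj
    simp only [Finset.mem_coe, Finset.mem_filter, Finset.mem_range]
    constructor
    · have h1 : r * (j + 1) ≤ r * (n / r) := Nat.mul_le_mul_left r hj
      have h2 : r * (n / r) ≤ n := Nat.mul_div_le n r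
      rw [Nat.mul_succ] at h1
      omega
    · rw [show r * j + a = a + j * r by ring, Nat.add_mul_mod_self_right]
      exact Nat.mod_eq_of_lt ha
  · intro j₁ _ j₂ _ heq
    simp only at heq
    exact Nat.eq_of_mul_eq_mul_left hr (by omega)

lemma turan_class_card (n r : ℕ) (v : Fin n) :
    #(Finset.univ.filter (fun w : Fin n => (w : ℕ) % r = (v : ℕ) % r)) =
      #((Finset.range n).filter (fun w => w % r = (v : ℕ) % r)) := by
  refine Finset.card_bij (fun w _ => (w : ℕ)) ?_ ?_ ?_
  · intro w hw
    simp only [Finset.mem_filter, Finset.mem_univ, true_and] at hw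
    simp only [Finset.mem_filter, Finset.mem_range]
    exact ⟨w.2, hw⟩
  · intro w₁ _ w₂ _ heq
    exact Fin.val_injective heq
  · intro w hw
    simp only [Finset.mem_filter, Finset.mem_range] at hw
    exact ⟨⟨w, hw.1⟩, by simp [hw.2], rfl⟩

lemma turan_degree_eq (n r : ℕ) (v : Fin n) :
    (turanGraph n r).degree v =
      n - #(Finset.univ.filter (fun w : Fin n => (w : ℕ) % r = (v : ℕ) % r)) := by
  rw [← SimpleGraph.card_neighborFinset_eq_degree, SimpleGraph.neighborFinset_eq_filter]
  have hiff : ∀ w : Fin n, (turanGraph n r).Adj v w ↔ ¬ ((w : ℕ) % r = (v : ℕ) % r) := by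
    intro w
    constructor
    · intro h hc; exact h (by omega)
    · intro h hc; exact h (by omega)
  have : Finset.univ.filter (fun w => (turanGraph n r).Adj v w) =
      Finset.univ.filter (fun w : Fin n => ¬ ((w : ℕ) % r = (v : ℕ) % r)) := by
    apply Finset.filter_congr
    intro w _
    simpa using hiff w
  rw [this]
  have hsplit := Finset.card_filter_add_card_filter_not
    (s := (Finset.univ : Finset (Fin n))) (fun w : Fin n => (w : ℕ) % r = (v : ℕ) % r)
  simp only [Finset.card_univ, Fintype.card_fin] at hsplit
  omega

lemma turan_edges_lower (n r : ℕ) (hr : 0 < r) :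
    (n : ℝ) * ((n : ℝ) - (n : ℝ) / r - 1) ≤ 2 * (#(turanGraph n r).edgeFinset : ℝ) := by
  have hsum := SimpleGraph.sum_degrees_eq_twice_card_edges (turanGraph n r)
  have hdeg : ∀ v : Fin n, (n : ℝ) - (n : ℝ) / r - 1 ≤ ((turanGraph n r).degree v : ℝ) := by
    intro v
    rw [turan_degree_eq n r v]
    have hle : #(Finset.univ.filter (fun w : Fin n => (w : ℕ) % r = (v : ℕ) % r)) ≤ n / r + 1 := by
      rw [turan_class_card]
      exact class_card_le n r _ hr
    have hle2 : #(Finset.univ.filter (fun w : Fin n => (w : ℕ) % r = (v : ℕ) % r)) ≤ n := by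
      calc _ ≤ #(Finset.univ : Finset (Fin n)) := Finset.card_le_card (Finset.filter_subset _ _)
        _ = n := by simp
    rw [Nat.cast_sub hle2]
    have : (#(Finset.univ.filter (fun w : Fin n => (w : ℕ) % r = (v : ℕ) % r)) : ℝ)
        ≤ (n : ℝ) / r + 1 := by
      calc (#(Finset.univ.filter (fun w : Fin n => (w : ℕ) % r = (v : ℕ) % r)) : ℝ)
          ≤ ((n / r + 1 : ℕ) : ℝ) := by exact_mod_cast hle
        _ ≤ (n : ℝ) / r + 1 := by
            push_cast
            have := Nat.cast_div_le (α := ℝ) (m := n) (n := r)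
            linarith
    linarith
  have : (n : ℝ) * ((n : ℝ) - (n : ℝ) / r - 1) ≤ ∑ v : Fin n, ((turanGraph n r).degree v : ℝ) := by
    calc (n : ℝ) * ((n : ℝ) - (n : ℝ) / r - 1)
        = ∑ _v : Fin n, ((n : ℝ) - (n : ℝ) / r - 1) := by
          rw [Finset.sum_const, Finset.card_univ, Fintype.card_fin, nsmul_eq_mul]
      _ ≤ _ := Finset.sum_le_sum fun v _ => hdeg v
  calc (n : ℝ) * ((n : ℝ) - (n : ℝ) / r - 1) ≤ ∑ v : Fin n, ((turanGraph n r).degree v : ℝ) := this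
    _ = ((∑ v : Fin n, (turanGraph n r).degree v : ℕ) : ℝ) := by push_cast; ring
    _ = 2 * (#(turanGraph n r).edgeFinset : ℝ) := by rw [hsum]; push_cast; ring

lemma turan_edges_upper (n r : ℕ) (hr : 0 < r) :
    2 * (#(turanGraph n r).edgeFinset : ℝ) ≤ (n : ℝ) * ((n : ℝ) - (n : ℝ) / r + 1) := by
  have hsum := SimpleGraph.sum_degrees_eq_twice_card_edges (turanGraph n r)
  have hdeg : ∀ v : Fin n, ((turanGraph n r).degree v : ℝ) ≤ (n : ℝ) - (n : ℝ) / r + 1 := by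
    intro v
    rw [turan_degree_eq n r v]
    have hge : n / r ≤ #(Finset.univ.filter (fun w : Fin n => (w : ℕ) % r = (v : ℕ) % r)) := by
      rw [turan_class_card]
      exact class_card_ge n r _ hr (Nat.mod_lt _ hr)
    have hcast : (n : ℝ) / r - 1 ≤ ((n / r : ℕ) : ℝ) := by
      have e := Nat.div_add_mod n r
      have hmod : (n % r : ℕ) < r := Nat.mod_lt _ hr
      have : (r : ℝ) * ((n / r : ℕ) : ℝ) + ((n % r : ℕ) : ℝ) = (n : ℝ) := by exact_mod_cast e
      have hrpos : (0 : ℝ) < r := by exact_mod_cast hr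
      have hmodR : ((n % r : ℕ) : ℝ) ≤ (r : ℝ) - 1 := by
        have : (n % r : ℕ) + 1 ≤ r := hmod
        have := (Nat.cast_le (α := ℝ)).2 this
        push_cast at this
        linarith
      rw [sub_le_iff_le_add, div_le_iff₀ hrpos]
      nlinarith
    have hub : ((n - #(Finset.univ.filter (fun w : Fin n => (w : ℕ) % r = (v : ℕ) % r)) : ℕ) : ℝ)
        ≤ (n : ℝ) - ((n / r : ℕ) : ℝ) := by
      have h1 : (n - #(Finset.univ.filter (fun w : Fin n => (w : ℕ) % r = (v : ℕ) % r)) : ℕ)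
          ≤ n - n / r := by omega
      have h2 : n / r ≤ n := Nat.div_le_self n r
      calc ((n - #(Finset.univ.filter (fun w : Fin n => (w : ℕ) % r = (v : ℕ) % r)) : ℕ) : ℝ)
          ≤ ((n - n / r : ℕ) : ℝ) := by exact_mod_cast h1
        _ = (n : ℝ) - ((n / r : ℕ) : ℝ) := by rw [Nat.cast_sub h2]
    linarith
  have h2 : ∑ v : Fin n, ((turanGraph n r).degree v : ℝ) ≤ (n : ℝ) * ((n : ℝ) - (n : ℝ) / r + 1) := by
    calc ∑ v : Fin n, ((turanGraph n r).degree v : ℝ)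
        ≤ ∑ _v : Fin n, ((n : ℝ) - (n : ℝ) / r + 1) := Finset.sum_le_sum fun v _ => hdeg v
      _ = (n : ℝ) * ((n : ℝ) - (n : ℝ) / r + 1) := by
          rw [Finset.sum_const, Finset.card_univ, Fintype.card_fin, nsmul_eq_mul]
  calc 2 * (#(turanGraph n r).edgeFinset : ℝ)
      = ((∑ v : Fin n, (turanGraph n r).degree v : ℕ) : ℝ) := by rw [hsum]; push_cast; ring
    _ = ∑ v : Fin n, ((turanGraph n r).degree v : ℝ) := by push_cast; ring
    _ ≤ _ := h2

end TuranCount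

section Box

/-- Erdős box lemma: a `k`-uniform family with at least `c·n^k` members on `n` vertices
(`n` large) contains a complete `k`-partite structure with parts of size `t`. -/
lemma box_lemma (k : ℕ) : ∀ (t : ℕ), 1 ≤ t → ∀ c : ℝ, 0 < c →
    ∃ n₀ : ℕ, ∀ (V : Type u) [Fintype V] [DecidableEq V] (H : Finset (Finset V)),
      n₀ ≤ Fintype.card V → (∀ A ∈ H, #A = k) →
      c * (Fintype.card V : ℝ) ^ k ≤ (#H : ℝ) →
      ∃ T : Fin k → Finset V, (∀ i, #(T i) = t) ∧
        (∀ i j, i ≠ j → Disjoint (T i) (T j)) ∧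
        (∀ f : Fin k → V, (∀ i, f i ∈ T i) → Finset.image f Finset.univ ∈ H) := by
  induction k with
  | zero =>
    intro t ht c hc
    refine ⟨0, fun V _ _ H _ hunif hcount => ?_⟩
    have hpos : 0 < #H := by
      by_contra h
      push_neg at h
      interval_cases h' : #H
      · simp [h'] at hcount; linarith
    obtain ⟨A, hA⟩ := Finset.card_pos.1 hpos
    have hAe : A = ∅ := Finset.card_eq_zero.1 (hunif A hA)
    refine ⟨fun i => i.elim0, fun i => i.elim0, fun i => i.elim0, fun f _ => ?_⟩
    rw [Finset.univ_eq_empty, Finset.image_empty]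
    rwa [hAe] at hA
  | succ k ih =>
    intro t ht c hc
    have ht0 : (0 : ℝ) < t := by exact_mod_cast ht
    have hc2 : (0 : ℝ) < (c/4)^(t+1) / (t:ℝ)^t := by positivity
    obtain ⟨n₁, hn₁⟩ := ih t ht ((c/4)^(t+1) / (t:ℝ)^t) hc2
    refine ⟨max n₁ (max t (max (⌈(4:ℝ)/c⌉₊ + 1) (⌈4*(t:ℝ)/c⌉₊ + 1))), ?_⟩
    intro V _ _ H hn hunif hcount
    set n := Fintype.card V with hndef
    have hnn₁ : n₁ ≤ n := le_trans (le_max_left _ _) hn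
    have hnt : t ≤ n := le_trans (le_trans (le_max_left _ _) (le_max_right _ _)) hn
    have hn4c : (4:ℝ)/c ≤ n := by
      have h1 : ⌈(4:ℝ)/c⌉₊ + 1 ≤ n :=
        le_trans (le_trans (le_trans (le_max_left _ _) (le_max_right _ _)) (le_max_right _ _)) hn
      calc (4:ℝ)/c ≤ ⌈(4:ℝ)/c⌉₊ := Nat.le_ceil _
        _ ≤ n := by exact_mod_cast le_trans (Nat.le_succ _) h1
    have hn4tc : 4*(t:ℝ)/c ≤ n := by
      have h1 : ⌈4*(t:ℝ)/c⌉₊ + 1 ≤ n :=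
        le_trans (le_trans (le_trans (le_max_right _ _) (le_max_right _ _)) (le_max_right _ _)) hn
      calc 4*(t:ℝ)/c ≤ ⌈4*(t:ℝ)/c⌉₊ := Nat.le_ceil _
        _ ≤ n := by exact_mod_cast le_trans (Nat.le_succ _) h1
    have hn1 : 1 ≤ n := le_trans ht hnt
    have hnR : (0:ℝ) < n := by exact_mod_cast hn1
    have hcn4 : (1:ℝ) ≤ c/4 * n := by
      have h1 : (4:ℝ) ≤ (n:ℝ) * c := (div_le_iff₀ hc).1 hn4c
      nlinarith
    have hcn4t : (t:ℝ) ≤ c/4 * n := by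
      have h1 : 4*(t:ℝ) ≤ (n:ℝ) * c := (div_le_iff₀ hc).1 hn4tc
      nlinarith
    haveI : Nonempty V := Fintype.card_pos_iff.1 (by omega)
    classical
    -- the link of a k-set S
    set D : Finset V → Finset V :=
      fun S => Finset.univ.filter (fun x => x ∉ S ∧ insert x S ∈ H) with hD
    set pk := (Finset.univ : Finset V).powersetCard k with hpk
    -- (1) #H ≤ ∑ d S
    have count1 : #H ≤ ∑ S ∈ pk, #(D S) := by
      rw [← Finset.card_sigma]
      refine Finset.card_le_card_of_injOn
        (fun A => ⟨A.erase (if h : A.Nonempty then h.choose else Classical.arbitrary V),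
          if h : A.Nonempty then h.choose else Classical.arbitrary V⟩) ?_ ?_
      · intro A hA
        have hAcard : #A = k + 1 := hunif A hA
        have hAne : A.Nonempty := Finset.card_pos.1 (by omega)
        show (⟨A.erase (if h : A.Nonempty then h.choose else Classical.arbitrary V),
          if h : A.Nonempty then h.choose else Classical.arbitrary V⟩ : (_ : Finset V) × V) ∈ _
        rw [dif_pos hAne]
        have hmem : hAne.choose ∈ A := hAne.choose_spec
        rw [Finset.mem_coe, Finset.mem_sigma]
        constructor
        · rw [hpk, Finset.mem_powersetCard]
          refine ⟨Finset.subset_univ _, ?_⟩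
          rw [Finset.card_erase_of_mem hmem, hAcard]
          omega
        · rw [hD]
          simp only [Finset.mem_filter, Finset.mem_univ, true_and]
          exact ⟨Finset.notMem_erase _ _, by rwa [Finset.insert_erase hmem]⟩
      · intro A hA B hB heq
        simp only [Finset.mem_coe] at hA hB
        have hAne : A.Nonempty := Finset.card_pos.1 (by rw [hunif A hA]; omega)
        have hBne : B.Nonempty := Finset.card_pos.1 (by rw [hunif B hB]; omega)
        simp only at heq
        rw [dif_pos hAne, dif_pos hBne] at heq
        have h1 := congrArg Sigma.fst heq
        have h2 := congrArg Sigma.snd heq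
        simp only at h1 h2
        have h2' : hAne.choose = hBne.choose := by exact_mod_cast h2
        calc A = insert hAne.choose (A.erase hAne.choose) :=
              (Finset.insert_erase hAne.choose_spec).symm
          _ = insert hBne.choose (B.erase hBne.choose) := by rw [h1, h2']
          _ = B := Finset.insert_erase hBne.choose_spec
    -- (2) the good sets
    set q := ⌈c/2 * (n:ℝ)⌉₊ with hqdef
    set good := pk.filter (fun S => q ≤ #(D S)) with hgood
    have count2 : ∑ S ∈ pk, #(D S) ≤ #good * n + n ^ k * q := by
      rw [← Finset.sum_filter_add_sum_filter_not pk (fun S => q ≤ #(D S))]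
      have hA : ∑ S ∈ pk.filter (fun S => q ≤ #(D S)), #(D S) ≤ #good * n := by
        rw [hgood]
        refine le_trans (Finset.sum_le_card_nsmul _ _ n fun S _ => ?_) (by simp [mul_comm])
        calc #(D S) ≤ #(Finset.univ : Finset V) := Finset.card_le_card (Finset.filter_subset _ _)
          _ = n := by rw [Finset.card_univ]
      have hB : ∑ S ∈ pk.filter (fun S => ¬ q ≤ #(D S)), #(D S) ≤ n ^ k * q := by
        refine le_trans (Finset.sum_le_card_nsmul _ _ q fun S hS => ?_) ?_
        · simp only [Finset.mem_filter] at hS; omega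
        · simp only [smul_eq_mul]
          have h1 : #(pk.filter (fun S => ¬ q ≤ #(D S))) ≤ #pk := Finset.card_filter_le _ _
          have h2 : #pk ≤ n ^ k := by
            rw [hpk, Finset.card_powersetCard, Finset.card_univ]
            exact Nat.choose_le_pow _ _
          exact Nat.mul_le_mul_right q (le_trans h1 h2)
      omega
    have hqle : (q:ℝ) ≤ c/2 * n + 1 := le_of_lt (Nat.ceil_lt_add_one (by positivity))
    have hqge : c/2 * (n:ℝ) ≤ q := Nat.le_ceil _
    have goodlb : c/4 * (n:ℝ)^k ≤ #good := by
      have hH1 : c * (n:ℝ)^(k+1) ≤ (#good : ℝ) * n + (n:ℝ)^k * q := by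
        calc c * (n:ℝ)^(k+1) ≤ (#H : ℝ) := hcount
          _ ≤ ((∑ S ∈ pk, #(D S) : ℕ) : ℝ) := by exact_mod_cast count1
          _ ≤ ((#good * n + n ^ k * q : ℕ) : ℝ) := by exact_mod_cast count2
          _ = (#good : ℝ) * n + (n:ℝ)^k * q := by push_cast; ring
      have hpow : (0:ℝ) < (n:ℝ)^k := by positivity
      have h2 : c * (n:ℝ)^(k+1) - (n:ℝ)^k * (c/2 * n + 1) ≤ (#good : ℝ) * n := by
        nlinarith [hpow]
      have h3 : c/4 * (n:ℝ)^k * n ≤ (#good : ℝ) * n := by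
        have : c * (n:ℝ)^(k+1) = c * (n:ℝ)^k * n := by ring
        nlinarith [hpow, hcn4]
      exact le_of_mul_le_mul_right (by linarith) hnR
    -- (3) pairs double counting
    set pt := (Finset.univ : Finset V).powersetCard t with hpt
    have hswap : ∑ T ∈ pt, #(good.filter (fun S => T ⊆ D S)) =
        ∑ S ∈ good, (#(D S)).choose t := by
      have h1 : ∀ S, #(pt.filter (fun T => T ⊆ D S)) = (#(D S)).choose t := by
        intro S
        have : pt.filter (fun T => T ⊆ D S) = (D S).powersetCard t := by
          ext T
          simp only [hpt, Finset.mem_filter, Finset.mem_powersetCard]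
          constructor
          · rintro ⟨⟨-, h2⟩, h3⟩; exact ⟨h3, h2⟩
          · rintro ⟨h2, h3⟩; exact ⟨⟨Finset.subset_univ _, h3⟩, h2⟩
        rw [this, Finset.card_powersetCard]
      simp only [Finset.card_filter]
      rw [Finset.sum_comm]
      simp only [← Finset.card_filter]
      exact Finset.sum_congr rfl fun S _ => h1 S
    have hlow : #good * q.choose t ≤ ∑ S ∈ good, (#(D S)).choose t := by
      refine Finset.card_nsmul_le_sum good _ _ fun S hS => ?_
      rw [hgood, Finset.mem_filter] at hS
      exact Nat.choose_le_choose t hS.2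
    have hptne : pt.Nonempty := by
      rw [hpt]
      rw [Finset.powersetCard_nonempty]
      rwa [Finset.card_univ]
    obtain ⟨T, hTpt, hTmax⟩ := Finset.exists_max_image pt
      (fun T => #(good.filter (fun S => T ⊆ D S))) hptne
    have count4 : #good * q.choose t ≤ n ^ t * #(good.filter (fun S => T ⊆ D S)) := by
      calc #good * q.choose t ≤ ∑ S ∈ good, (#(D S)).choose t := hlow
        _ = ∑ T' ∈ pt, #(good.filter (fun S => T' ⊆ D S)) := hswap.symm
        _ ≤ #pt * #(good.filter (fun S => T ⊆ D S)) := by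
            refine le_trans (Finset.sum_le_card_nsmul _ _ _ fun T' hT' => hTmax T' hT') ?_
            simp [smul_eq_mul]
        _ ≤ n ^ t * #(good.filter (fun S => T ⊆ D S)) := by
            refine Nat.mul_le_mul_right _ ?_
            rw [hpt, Finset.card_powersetCard, Finset.card_univ]
            exact Nat.choose_le_pow _ _
    -- (5) lower bound on q.choose t
    have hqt : t ≤ q := by
      have : (t:ℝ) ≤ q := le_trans (by linarith) hqge
      exact_mod_cast this
    have hchoose : (c/4 * (n:ℝ))^t / (t:ℝ)^t ≤ (q.choose t : ℝ) := by
      have h1 : (q + 1 - t)^t ≤ q.descFactorial t := Nat.pow_sub_le_descFactorial q t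
      have h2 : q.descFactorial t = t.factorial * q.choose t :=
        Nat.descFactorial_eq_factorial_mul_choose q t
      have h3 : t.factorial ≤ t ^ t := Nat.factorial_le_pow t
      have h4 : (q + 1 - t)^t ≤ t ^ t * q.choose t := by
        calc (q + 1 - t)^t ≤ t.factorial * q.choose t := by omega
          _ ≤ t ^ t * q.choose t := Nat.mul_le_mul_right _ h3
      have h5 : c/4 * (n:ℝ) ≤ ((q + 1 - t : ℕ) : ℝ) := by
        rw [Nat.cast_sub (by omega)]
        push_cast
        linarith
      have h6 : (c/4 * (n:ℝ))^t ≤ ((q + 1 - t : ℕ) : ℝ)^t := by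
        exact pow_le_pow_left₀ (by positivity) h5 t
      have h7 : ((q + 1 - t : ℕ) : ℝ)^t ≤ (t:ℝ)^t * (q.choose t : ℝ) := by exact_mod_cast h4
      rw [div_le_iff₀ (by positivity : (0:ℝ) < (t:ℝ)^t)]
      calc (c/4 * (n:ℝ))^t ≤ ((q + 1 - t : ℕ) : ℝ)^t := h6
        _ ≤ (t:ℝ)^t * q.choose t := h7
        _ = (q.choose t : ℝ) * (t:ℝ)^t := by ring
    -- (6) the selected T has a large link family
    set HT := good.filter (fun S => T ⊆ D S) with hHT
    have hmlb : (c/4)^(t+1) / (t:ℝ)^t * (n:ℝ)^k ≤ (#HT : ℝ) := by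
      have hcast : (#good : ℝ) * (q.choose t : ℝ) ≤ (n:ℝ) ^ t * (#HT : ℝ) := by
        exact_mod_cast count4
      have hg0 : (0:ℝ) ≤ c/4 * (n:ℝ)^k := by positivity
      have hq0 : (0:ℝ) ≤ (c/4 * (n:ℝ))^t / (t:ℝ)^t := by positivity
      have hprod : (c/4 * (n:ℝ)^k) * ((c/4 * (n:ℝ))^t / (t:ℝ)^t)
          ≤ (#good : ℝ) * (q.choose t : ℝ) := by
        refine mul_le_mul goodlb hchoose hq0 ?_
        positivity
      have hid : (c/4 * (n:ℝ)^k) * ((c/4 * (n:ℝ))^t / (t:ℝ)^t)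
          = ((c/4)^(t+1) / (t:ℝ)^t * (n:ℝ)^k) * (n:ℝ)^t := by
        rw [mul_pow]
        ring
      have hnt0 : (0:ℝ) < (n:ℝ)^t := by positivity
      have : ((c/4)^(t+1) / (t:ℝ)^t * (n:ℝ)^k) * (n:ℝ)^t ≤ (#HT : ℝ) * (n:ℝ)^t := by
        rw [← hid]
        calc _ ≤ (#good : ℝ) * (q.choose t : ℝ) := hprod
          _ ≤ (n:ℝ) ^ t * (#HT : ℝ) := hcast
          _ = (#HT : ℝ) * (n:ℝ)^t := by ring
      exact le_of_mul_le_mul_right this hnt0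
    -- apply the induction hypothesis to HT
    have hHTunif : ∀ S ∈ HT, #S = k := by
      intro S hS
      rw [hHT, Finset.mem_filter, hgood, Finset.mem_filter, hpk, Finset.mem_powersetCard] at hS
      exact hS.1.1.2
    obtain ⟨T', hT'card, hT'disj, hT'trans⟩ := hn₁ V HT hnn₁ hHTunif hmlb
    -- facts about T
    have hTcard : #T = t := by
      rw [hpt, Finset.mem_powersetCard] at hTpt
      exact hTpt.2
    have hT'ne : ∀ j, (T' j).Nonempty := fun j =>
      Finset.card_pos.1 (by rw [hT'card j]; omega)
    have hHTD : ∀ S ∈ HT, T ⊆ D S := by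
      intro S hS
      rw [hHT, Finset.mem_filter] at hS
      exact hS.2
    have hDmem : ∀ S x, x ∈ D S → x ∉ S ∧ insert x S ∈ H := by
      intro S x hx
      rw [hD] at hx
      simp only [Finset.mem_filter, Finset.mem_univ, true_and] at hx
      exact hx
    -- T' parts are disjoint from T
    have hTdisj : ∀ i, Disjoint (T' i) T := by
      intro i
      rw [Finset.disjoint_left]
      intro v hvi hvT
      have hfmem : ∀ j, (if j = i then v else (hT'ne j).choose) ∈ T' j := by
        intro j
        by_cases hji : j = i
        · rw [if_pos hji, hji]; exact hvi
        · rw [if_neg hji]; exact (hT'ne j).choose_spec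
      have hS' := hT'trans (fun j => if j = i then v else (hT'ne j).choose) hfmem
      have hvS' : v ∈ Finset.image (fun j => if j = i then v else (hT'ne j).choose)
          Finset.univ :=
        Finset.mem_image.2 ⟨i, Finset.mem_univ _, by simp⟩
      exact (hDmem _ v (hHTD _ hS' hvT)).1 hvS'
    -- assemble the k+1 parts
    refine ⟨Fin.cons T T', ?_, ?_, ?_⟩
    · intro i
      refine Fin.cases ?_ ?_ i
      · rw [Fin.cons_zero]; exact hTcard
      · intro j; rw [Fin.cons_succ]; exact hT'card j
    · intro i j
      refine Fin.cases ?_ (fun i' => ?_) i <;> refine Fin.cases ?_ (fun j' => ?_) j <;> intro hij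
      · exact absurd rfl hij
      · rw [Fin.cons_zero, Fin.cons_succ]; exact (hTdisj j').symm
      · rw [Fin.cons_succ, Fin.cons_zero]; exact hTdisj i'
      · rw [Fin.cons_succ, Fin.cons_succ]
        refine hT'disj i' j' fun h => ?_
        rw [h] at hij
        exact hij rfl
    · intro f hf
      have hg : ∀ j : Fin k, (f ∘ Fin.succ) j ∈ T' j := by
        intro j
        have := hf j.succ
        rwa [Fin.cons_succ] at this
      have hS' := hT'trans (f ∘ Fin.succ) hg
      have hf0 : f 0 ∈ T := by have := hf 0; rwa [Fin.cons_zero] at this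
      have hins := (hDmem _ (f 0) (hHTD _ hS' hf0)).2
      have himg : Finset.image f Finset.univ =
          insert (f 0) (Finset.image (f ∘ Fin.succ) Finset.univ) := by
        rw [Fin.univ_succ, Finset.cons_eq_insert, Finset.image_insert, Finset.map_eq_image,
          Finset.image_image]
        rfl
      rwa [himg]

end Box

section Assembly

lemma key_ineq (ε x m a b E TN TM : ℝ) (hx2 : 2 ≤ x) (hm2 : 2 ≤ m) (hxm : m ≤ x)
    (hεM : 2 ≤ ε * (m - 1)) (hab : a * m = b * x) (hba : b ≤ a)
    (hTN : x * (x - a - 1) ≤ 2 * TN) (hTM : 2 * TM ≤ m * (m - b + 1))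
    (hE : TN + ε * x^2 ≤ E) (hε : 0 < ε) :
    ε/2 * (m*(m-1)) * (x*(x-1)) ≤ E * (m*(m-1)) - TM * (x*(x-1)) := by
  have hm0 : (0:ℝ) ≤ m := by linarith
  have hx0 : (0:ℝ) ≤ x := by linarith
  have hmm1 : (0:ℝ) ≤ m*(m-1) := by nlinarith
  have hxx1 : (0:ℝ) ≤ x*(x-1) := by nlinarith
  have h1 : (x*(x-a-1) + 2*ε*x^2) * (m*(m-1)) ≤ 2*E*(m*(m-1)) :=
    mul_le_mul_of_nonneg_right (by linarith) hmm1
  have h2 : 2*TM*(x*(x-1)) ≤ m*(m-b+1)*(x*(x-1)) :=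
    mul_le_mul_of_nonneg_right hTM hxx1
  have hexp : x*(x-a-1)*(m*(m-1)) - m*(m-b+1)*(x*(x-1))
      = x*m*(-2*x+2+(a-b)) - x*m*(a*m-b*x) := by ring
  have hab0 : a*m - b*x = 0 := by linarith
  have hxm0 : (0:ℝ) ≤ x*m := mul_nonneg hx0 hm0
  have h3 : x*m*(-2*x) ≤ x*m*(-2*x+2+(a-b)) :=
    mul_le_mul_of_nonneg_left (by linarith) hxm0
  have h4 : -2*x^2*m ≤ x*(x-a-1)*(m*(m-1)) - m*(m-b+1)*(x*(x-1)) := by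
    rw [hexp, hab0, mul_zero, sub_zero]
    nlinarith [h3]
  have hx2m : (0:ℝ) ≤ x^2*m := by positivity
  have h5 : 2*x^2*m ≤ ε*x^2*(m*(m-1)) := by
    have := mul_le_mul_of_nonneg_left hεM hx2m
    nlinarith [this]
  have h6 : ε*(m*(m-1))*(x*(x-1)) ≤ ε*(m*(m-1))*x^2 := by
    have hε0 : (0:ℝ) ≤ ε*(m*(m-1)) := mul_nonneg (le_of_lt hε) hmm1
    refine mul_le_mul_of_nonneg_left (by nlinarith) hε0
  nlinarith [h1, h2, h4, h5, h6]

end Assembly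

lemma turanEdges_eq_card (r n : ℕ) : turanEdges r n = #(turanGraph n r).edgeFinset := by
  rw [turanEdges, ← SimpleGraph.coe_edgeFinset, Set.ncard_coe_finset]

set_option maxHeartbeats 1000000 in
/-- **Erdős–Stone theorem** (Theorem 1.4): for `r ≥ 2`, `t ≥ 1`, and `ε > 0`, there is `n₀`
such that every graph on `n ≥ n₀` vertices with at least `t_r(n) + ε n²` edges contains
`K_{r+1}[t]`. -/
theorem erdos_stone (r t : ℕ) (hr : 2 ≤ r) (ht : 1 ≤ t) (ε : ℝ) (hε : 0 < ε) :
    ∃ n₀ : ℕ, ∀ n : ℕ, n₀ ≤ n → ∀ (V : Type u) [Fintype V], ∀ G : SimpleGraph V,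
      Fintype.card V = n →
      (turanEdges r n : ℝ) + ε * (n : ℝ) ^ 2 ≤ (G.edgeSet.ncard : ℝ) →
      ContainsCopy (blowup (r + 1) t) G := by
  classical
  set M := max (r + 2) (⌈(2:ℝ)/ε⌉₊ + 2) with hMdef
  have hM2 : 2 ≤ M := le_trans (by omega) (le_max_left _ _)
  have hMr : r + 2 ≤ M := le_max_left _ _
  have hMε : 2/ε + 1 ≤ (M:ℝ) := by
    have h1 : (⌈(2:ℝ)/ε⌉₊ + 2 : ℕ) ≤ M := le_max_right _ _
    have h2 : (2:ℝ)/ε ≤ ⌈(2:ℝ)/ε⌉₊ := Nat.le_ceil _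
    have h3 : ((⌈(2:ℝ)/ε⌉₊ + 2 : ℕ) : ℝ) ≤ (M:ℝ) := by exact_mod_cast h1
    push_cast at h3
    linarith
  have hMR : (0:ℝ) < M := by
    have : (2:ℕ) ≤ M := hM2
    exact_mod_cast lt_of_lt_of_le (by norm_num) this
  set c := ε / (2*(M:ℝ))^(r+1) with hcdef
  have hc : 0 < c := by positivity
  obtain ⟨n₁, hbox⟩ := box_lemma.{u} (r + 1) t ht c hc
  refine ⟨max n₁ (2*M), fun n hn V _ G hcard hedge => ?_⟩
  subst hcard
  set n := Fintype.card V with hndef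
  have hn₁ : n₁ ≤ n := le_trans (le_max_left _ _) hn
  have hn2M : 2*M ≤ n := le_trans (le_max_right _ _) hn
  have hMn : M ≤ n := by omega
  have hn2 : 2 ≤ n := by omega
  have hr0 : 0 < r := by omega
  have hrR : (0:ℝ) < r := by exact_mod_cast hr0
  have hnR : (0:ℝ) < n := by exact_mod_cast (by omega : 0 < n)
  -- edge counts
  have hEcast : (G.edgeSet.ncard : ℝ) = (#G.edgeFinset : ℝ) := by
    rw [← SimpleGraph.coe_edgeFinset, Set.ncard_coe_finset]
  rw [hEcast, turanEdges_eq_card] at hedge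
  set E := #G.edgeFinset with hEdef
  set TN := #(turanGraph n r).edgeFinset with hTNdef
  set TM := #(turanGraph M r).edgeFinset with hTMdef
  -- the good sets
  set eS : Finset V → ℕ := fun S => #((edges2 G).filter (· ⊆ S)) with heSdef
  set good := (Finset.univ.powersetCard M).filter (fun S => TM + 1 ≤ eS S) with hgooddef
  -- counting
  have hsum_ge : E * (n - 2).choose (M - 2) ≤ ∑ S ∈ Finset.univ.powersetCard M, eS S := by
    simp only [heSdef, hEdef]
    rw [← edges2_card G]
    exact sum_edges_within_ge G M hM2
  have hsum_le : ∑ S ∈ Finset.univ.powersetCard M, eS S ≤ #good * M.choose 2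
      + n.choose M * TM := by
    rw [← Finset.sum_filter_add_sum_filter_not (Finset.univ.powersetCard M)
      (fun S => TM + 1 ≤ eS S)]
    have hgpart : ∑ S ∈ (Finset.univ.powersetCard M).filter (fun S => TM + 1 ≤ eS S), eS S
        ≤ #good * M.choose 2 := by
      rw [hgooddef]
      refine le_trans (Finset.sum_le_card_nsmul _ _ (M.choose 2) fun S hS => ?_) (by simp)
      have hSM : #S = M := by
        simp only [Finset.mem_filter, Finset.mem_powersetCard] at hS
        exact hS.1.2
      have := edges2_within_le G S
      rwa [hSM] at this
    have hbpart : ∑ S ∈ (Finset.univ.powersetCard M).filter (fun S => ¬ (TM + 1 ≤ eS S)), eS S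
        ≤ n.choose M * TM := by
      refine le_trans (Finset.sum_le_card_nsmul _ _ TM fun S hS => ?_) ?_
      · simp only [Finset.mem_filter] at hS; omega
      · simp only [smul_eq_mul]
        refine Nat.mul_le_mul_right TM (le_trans (Finset.card_filter_le _ _) ?_)
        rw [Finset.card_powersetCard, Finset.card_univ]
    omega
  have hid : n.choose M * (M * (M - 1)) = (n - 2).choose (M - 2) * (n * (n - 1)) :=
    choose_two_identity n M hM2 hMn
  have hch2 : M.choose 2 * 2 = M * (M - 1) := by
    have h1 := Nat.choose_succ_right_eq M 1
    norm_num at h1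
    omega
  -- real versions
  have hMRc : (2:ℝ) ≤ (M:ℝ) := by exact_mod_cast hM2
  have hnRc : (2:ℝ) ≤ (n:ℝ) := by exact_mod_cast hn2
  have hMnR : (M:ℝ) ≤ (n:ℝ) := by exact_mod_cast hMn
  have hεM2 : 2 ≤ ε * ((M:ℝ) - 1) := by
    have h1 : 2/ε ≤ (M:ℝ) - 1 := by linarith
    rw [div_le_iff₀ hε] at h1
    nlinarith
  have hkey : ε/2 * ((M:ℝ)*((M:ℝ)-1)) * ((n:ℝ)*((n:ℝ)-1)) ≤
      (E:ℝ) * ((M:ℝ)*((M:ℝ)-1)) - (TM:ℝ) * ((n:ℝ)*((n:ℝ)-1)) := by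
    refine key_ineq ε (n:ℝ) (M:ℝ) ((n:ℝ)/r) ((M:ℝ)/r) (E:ℝ) (TN:ℝ) (TM:ℝ)
      hnRc hMRc hMnR hεM2 ?_ ?_ ?_ ?_ ?_ hε
    · field_simp
    · gcongr
    · have := turan_edges_lower n r hr0
      linarith
    · have := turan_edges_upper M r hr0
      linarith
    · have : ((n:ℝ))^2 = (n:ℝ)^2 := rfl
      push_cast at hedge ⊢
      linarith
  -- lower bound on #good
  have hgoodlb : ε * (n.choose M : ℝ) ≤ (#good : ℝ) := by
    have hC1 : (E : ℝ) * ((n-2).choose (M-2) : ℝ) ≤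
        ((∑ S ∈ Finset.univ.powersetCard M, eS S : ℕ) : ℝ) := by exact_mod_cast hsum_ge
    have hC2 : ((∑ S ∈ Finset.univ.powersetCard M, eS S : ℕ) : ℝ) ≤
        (#good : ℝ) * (M.choose 2 : ℝ) + (n.choose M : ℝ) * (TM : ℝ) := by
      exact_mod_cast hsum_le
    have hC3 : ((n-2).choose (M-2) : ℝ) * ((n:ℝ)*((n:ℝ)-1)) =
        (n.choose M : ℝ) * ((M:ℝ)*((M:ℝ)-1)) := by
      have h1 : ((n.choose M * (M * (M - 1)) : ℕ) : ℝ)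
          = (((n - 2).choose (M - 2) * (n * (n - 1)) : ℕ) : ℝ) := by exact_mod_cast hid
      have h2 : ((M - 1 : ℕ) : ℝ) = (M:ℝ) - 1 := by
        rw [Nat.cast_sub (by omega)]; norm_num
      have h3 : ((n - 1 : ℕ) : ℝ) = (n:ℝ) - 1 := by
        rw [Nat.cast_sub (by omega)]; norm_num
      push_cast [h2, h3] at h1
      linarith
    have hC4 : ((M.choose 2 : ℕ) : ℝ) = (M:ℝ)*((M:ℝ)-1)/2 := by
      have h2 : ((M - 1 : ℕ) : ℝ) = (M:ℝ) - 1 := by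
        rw [Nat.cast_sub (by omega)]; norm_num
      have : ((M.choose 2 * 2 : ℕ) : ℝ) = ((M * (M-1) : ℕ) : ℝ) := by exact_mod_cast hch2
      push_cast [h2] at this
      linarith
    -- multiply hC1/hC2 by n(n-1)
    have hnn1 : (0:ℝ) < (n:ℝ)*((n:ℝ)-1) := by nlinarith
    have hMM1 : (0:ℝ) < (M:ℝ)*((M:ℝ)-1) := by nlinarith
    have hC5 : (E : ℝ) * ((n.choose M : ℝ) * ((M:ℝ)*((M:ℝ)-1))) ≤
        ((#good : ℝ) * (M.choose 2 : ℝ) + (n.choose M : ℝ) * (TM : ℝ)) * ((n:ℝ)*((n:ℝ)-1)) := by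
      calc (E : ℝ) * ((n.choose M : ℝ) * ((M:ℝ)*((M:ℝ)-1)))
          = (E : ℝ) * ((n-2).choose (M-2) : ℝ) * ((n:ℝ)*((n:ℝ)-1)) := by rw [← hC3]; ring
        _ ≤ _ := by
            refine mul_le_mul_of_nonneg_right ?_ (le_of_lt hnn1)
            exact le_trans hC1 hC2
    have hC6 : (n.choose M : ℝ) * ((E:ℝ) * ((M:ℝ)*((M:ℝ)-1)) - (TM:ℝ) * ((n:ℝ)*((n:ℝ)-1)))
        ≤ (#good : ℝ) * ((M:ℝ)*((M:ℝ)-1)/2) * ((n:ℝ)*((n:ℝ)-1)) := by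
      rw [← hC4]
      linarith [hC5]
    have hC7 : (n.choose M : ℝ) * (ε/2 * ((M:ℝ)*((M:ℝ)-1)) * ((n:ℝ)*((n:ℝ)-1)))
        ≤ (n.choose M : ℝ) * ((E:ℝ) * ((M:ℝ)*((M:ℝ)-1)) - (TM:ℝ) * ((n:ℝ)*((n:ℝ)-1))) := by
      refine mul_le_mul_of_nonneg_left hkey (by positivity)
    have hC8 := le_trans hC7 hC6
    have hdiv : (0:ℝ) < ((M:ℝ)*((M:ℝ)-1)/2) * ((n:ℝ)*((n:ℝ)-1)) := by nlinarith
    have h8 : ε * (n.choose M:ℝ) * (((M:ℝ)*((M:ℝ)-1)/2) * ((n:ℝ)*((n:ℝ)-1)))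
        ≤ (#good:ℝ) * (((M:ℝ)*((M:ℝ)-1)/2) * ((n:ℝ)*((n:ℝ)-1))) := by
      calc ε * (n.choose M:ℝ) * (((M:ℝ)*((M:ℝ)-1)/2) * ((n:ℝ)*((n:ℝ)-1)))
          = (n.choose M : ℝ) * (ε/2 * ((M:ℝ)*((M:ℝ)-1)) * ((n:ℝ)*((n:ℝ)-1))) := by ring
        _ ≤ (n.choose M : ℝ) * ((E:ℝ) * ((M:ℝ)*((M:ℝ)-1)) - (TM:ℝ) * ((n:ℝ)*((n:ℝ)-1))) := hC7
        _ ≤ (#good : ℝ) * ((M:ℝ)*((M:ℝ)-1)/2) * ((n:ℝ)*((n:ℝ)-1)) := hC6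
        _ = (#good:ℝ) * (((M:ℝ)*((M:ℝ)-1)/2) * ((n:ℝ)*((n:ℝ)-1))) := by ring
    exact le_of_mul_le_mul_right h8 hdiv
  -- every good set contains an (r+1)-clique
  have hclique : ∀ S ∈ good, ∃ A, A ⊆ S ∧ #A = r + 1 ∧ CliqueOn G A := by
    intro S hS
    rw [hgooddef, Finset.mem_filter, Finset.mem_powersetCard] at hS
    exact clique_of_dense_subset G hr0 (by omega) S hS.1.2 hS.2
  set Cl := (Finset.univ.powersetCard (r+1)).filter (fun A => CliqueOn G A) with hCldef
  have hfiber : #good ≤ n.choose (M - (r+1)) * #Cl := by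
    set K : Finset V → Finset V :=
      fun S => if h : S ∈ good then (hclique S h).choose else ∅ with hKdef
    have hKspec : ∀ S (h : S ∈ good), K S ⊆ S ∧ #(K S) = r + 1 ∧ CliqueOn G (K S) := by
      intro S h
      have : K S = (hclique S h).choose := by rw [hKdef]; exact dif_pos h
      rw [this]
      exact (hclique S h).choose_spec
    have h1 : #good ≤ n.choose (M - (r+1)) * #(good.image K) := by
      refine Finset.card_le_mul_card_image good _ fun A hA => ?_
      obtain ⟨S₀, hS₀g, hS₀⟩ := Finset.mem_image.1 hA
      have hAcard : #A = r + 1 := by rw [← hS₀]; exact (hKspec S₀ hS₀g).2.1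
      have hsub : good.filter (fun S => K S = A) ⊆
          (Finset.univ.powersetCard M).filter (fun S => A ⊆ S) := by
        intro S hS
        rw [Finset.mem_filter] at hS ⊢
        have hSg : S ∈ good := hS.1
        have hSpc : S ∈ Finset.univ.powersetCard M := by
          rw [hgooddef, Finset.mem_filter] at hSg
          exact hSg.1
        refine ⟨hSpc, ?_⟩
        rw [← hS.2]
        exact (hKspec S hSg).1
      refine le_trans (Finset.card_le_card hsub) ?_
      have := card_supersets_le (V := V) A M
      rwa [hAcard] at this
    have h2 : good.image K ⊆ Cl := by
      intro A hA
      obtain ⟨S₀, hS₀g, hS₀⟩ := Finset.mem_image.1 hA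
      rw [hCldef, Finset.mem_filter, Finset.mem_powersetCard, ← hS₀]
      exact ⟨⟨Finset.subset_univ _, (hKspec S₀ hS₀g).2.1⟩, (hKspec S₀ hS₀g).2.2⟩
    exact le_trans h1 (Nat.mul_le_mul_left _ (Finset.card_le_card h2))
  -- #Cl is at least c n^(r+1)
  have hClLb : c * (n:ℝ)^(r+1) ≤ (#Cl : ℝ) := by
    set D := (n.choose (M - (r+1)) : ℝ) with hDdef
    set P := ((M:ℝ))^(r+1) with hPdef
    have hD0 : (0:ℝ) < D := by
      rw [hDdef]
      exact_mod_cast Nat.choose_pos (show M - (r+1) ≤ n by omega)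
    have hP0 : (0:ℝ) < P := by rw [hPdef]; positivity
    have e1 : ε * (n.choose M:ℝ) ≤ D * (#Cl:ℝ) := by
      refine le_trans hgoodlb ?_
      rw [hDdef]
      exact_mod_cast hfiber
    have e2 : D * (((n:ℝ))/2)^(r+1) ≤ (n.choose M:ℝ) * P := by
      have hnat := choose_sub_mul_pow_le n M (r+1) (by omega) hMn
      have hcast : D * (((n - M : ℕ)):ℝ)^(r+1) ≤ (n.choose M:ℝ) * P := by
        rw [hDdef, hPdef]
        exact_mod_cast hnat
      refine le_trans ?_ hcast
      have hnm : ((n:ℝ))/2 ≤ ((n - M : ℕ) : ℝ) := by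
        rw [Nat.cast_sub hMn]
        have : (2*M : ℕ) ≤ n := hn2M
        have : ((2*M : ℕ) : ℝ) ≤ (n:ℝ) := by exact_mod_cast this
        push_cast at this
        linarith
      refine mul_le_mul_of_nonneg_left ?_ (le_of_lt hD0)
      exact pow_le_pow_left₀ (by positivity) hnm _
    have hs1 : c * (n:ℝ)^(r+1) * (D*P) = ε * (D * (((n:ℝ))/2)^(r+1)) := by
      rw [hcdef, hPdef]
      rw [mul_pow, div_pow]
      field_simp
    have hs2 : c * (n:ℝ)^(r+1) * (D*P) ≤ (#Cl:ℝ) * (D*P) := by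
      rw [hs1]
      calc ε * (D * (((n:ℝ))/2)^(r+1)) ≤ ε * ((n.choose M:ℝ) * P) :=
            mul_le_mul_of_nonneg_left e2 (le_of_lt hε)
        _ = (ε * (n.choose M:ℝ)) * P := by ring
        _ ≤ (D * (#Cl:ℝ)) * P := mul_le_mul_of_nonneg_right e1 (le_of_lt hP0)
        _ = (#Cl:ℝ) * (D*P) := by ring
    exact le_of_mul_le_mul_right hs2 (by positivity)
  -- apply the box lemma
  have hClunif : ∀ A ∈ Cl, #A = r + 1 := by
    intro A hA
    rw [hCldef, Finset.mem_filter, Finset.mem_powersetCard] at hA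
    exact hA.1.2
  obtain ⟨T, hTcard, hTdisj, hTtrans⟩ := hbox V Cl hn₁ hClunif hClLb
  have hTne : ∀ i, (T i).Nonempty := fun i => Finset.card_pos.1 (by rw [hTcard i]; omega)
  -- complete multipartite adjacency
  have hadj : ∀ (i j : Fin (r+1)) (v w : V), i ≠ j → v ∈ T i → w ∈ T j → G.Adj v w := by
    intro i j v w hij hvi hwj
    have hg : ∀ l, (if l = i then v else if l = j then w else (hTne l).choose) ∈ T l := by
      intro l
      by_cases hli : l = i
      · rw [if_pos hli, hli]; exact hvi
      · rw [if_neg hli]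
        by_cases hlj : l = j
        · rw [if_pos hlj, hlj]; exact hwj
        · rw [if_neg hlj]; exact (hTne l).choose_spec
    have hmem := hTtrans (fun l => if l = i then v else if l = j then w else (hTne l).choose) hg
    rw [hCldef, Finset.mem_filter] at hmem
    have hvmem : v ∈ Finset.image
        (fun l => if l = i then v else if l = j then w else (hTne l).choose) Finset.univ :=
      Finset.mem_image.2 ⟨i, Finset.mem_univ _, by simp⟩
    have hwmem : w ∈ Finset.image
        (fun l => if l = i then v else if l = j then w else (hTne l).choose) Finset.univ :=
      Finset.mem_image.2 ⟨j, Finset.mem_univ _, by simp [if_neg (Ne.symm hij)]⟩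
    have hvw : v ≠ w := by
      intro h
      exact Finset.disjoint_left.1 (hTdisj i j hij) hvi (h ▸ hwj)
    exact hmem.2 v hvmem w hwmem hvw
  -- build the embedding
  refine ⟨fun p => (((Finset.equivFinOfCardEq (hTcard p.1)).symm p.2 : {x // x ∈ T p.1}) : V),
    ?_, ?_⟩
  · intro p q hpq
    have hp : (((Finset.equivFinOfCardEq (hTcard p.1)).symm p.2 : {x // x ∈ T p.1}) : V)
        ∈ T p.1 := ((Finset.equivFinOfCardEq (hTcard p.1)).symm p.2).2
    have hq : (((Finset.equivFinOfCardEq (hTcard q.1)).symm q.2 : {x // x ∈ T q.1}) : V)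
        ∈ T q.1 := ((Finset.equivFinOfCardEq (hTcard q.1)).symm q.2).2
    obtain ⟨p1, p2⟩ := p
    obtain ⟨q1, q2⟩ := q
    simp only at hpq hp hq
    by_cases h1 : p1 = q1
    · subst h1
      have h2 : ((Finset.equivFinOfCardEq (hTcard p1)).symm p2 : {x // x ∈ T p1})
          = ((Finset.equivFinOfCardEq (hTcard p1)).symm q2 : {x // x ∈ T p1}) :=
        Subtype.coe_injective hpq
      have h3 : p2 = q2 := (Finset.equivFinOfCardEq (hTcard p1)).symm.injective h2
      rw [h3]
    · exfalso
      refine Finset.disjoint_left.1 (hTdisj p1 q1 h1) hp ?_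
      rw [hpq]
      exact hq
  · intro p q hpq
    exact hadj p.1 q.1 _ _ hpq
      ((Finset.equivFinOfCardEq (hTcard p.1)).symm p.2).2
      ((Finset.equivFinOfCardEq (hTcard q.1)).symm q.2).2
end

section
/- Let F be a graph with at least one edge, and let χ(F) denote its chromatic number. Then ex(n, F) = ((χ(F) − 2)/(χ(F) − 1) + o(1))·C(n,2); that is, for every ε > 0 there exists n₀ such that for all n ≥ n₀, |ex(n, F) − ((χ(F) − 2)/(χ(F) − 1))·C(n,2)| ≤ ε·C(n,2). -/
open SimpleGraph

universe u v

lemma sum_filter_adj_comm {V : Type*} [DecidableEq V] (G : SimpleGraph V) [DecidableRel G.Adj]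
    (s w : Finset V) :
    ∑ v ∈ s, (w.filter (G.Adj v)).card = ∑ u ∈ w, (s.filter (G.Adj u)).card := by
  simp only [Finset.card_filter]
  rw [Finset.sum_comm]
  congr 1; ext u; congr 1; ext v; simp [G.adj_comm]

set_option maxHeartbeats 1000000 in
-- peel lemma
lemma peel {V : Type*} [DecidableEq V] (G : SimpleGraph V) [DecidableRel G.Adj]
    (c' : ℝ) (hc : 0 ≤ c') (s : Finset V) :
    ∃ s', s' ⊆ s ∧ (∀ v ∈ s', c' * s'.card ≤ ((s'.filter (G.Adj v)).card : ℝ)) ∧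
      (∑ v ∈ s, ((s.filter (G.Adj v)).card : ℝ))
        - c' * ((s.card : ℝ) * (s.card + 1) - (s'.card : ℝ) * (s'.card + 1))
        ≤ ∑ v ∈ s', ((s'.filter (G.Adj v)).card : ℝ) := by
  induction s using Finset.strongInduction with
  | _ s ih =>
    by_cases h : ∀ v ∈ s, c' * s.card ≤ ((s.filter (G.Adj v)).card : ℝ)
    · exact ⟨s, Finset.Subset.refl s, h, by simp⟩
    · push_neg at h
      obtain ⟨v, hv, hdv⟩ := h
      have hlt : s.erase v ⊂ s := Finset.erase_ssubset hv
      obtain ⟨s', hsub, hmin, hbound⟩ := ih _ hlt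
      refine ⟨s', hsub.trans (Finset.erase_subset v s), hmin, ?_⟩
      -- key: D s ≤ D (erase v) + 2 * d
      have key : ∑ u ∈ s, (s.filter (G.Adj u)).card ≤
          (∑ u ∈ s.erase v, ((s.erase v).filter (G.Adj u)).card) + 2 * (s.filter (G.Adj v)).card := by
        rw [← Finset.add_sum_erase _ _ hv]
        have h1 : ∀ u ∈ s.erase v, (s.filter (G.Adj u)).card ≤
            ((s.erase v).filter (G.Adj u)).card + (if G.Adj u v then 1 else 0) := by
          intro u _
          by_cases hadj : G.Adj u v
          · simp only [hadj, if_true]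
            have : s.filter (G.Adj u) ⊆ insert v ((s.erase v).filter (G.Adj u)) := by
              intro x hx
              simp only [Finset.mem_filter, Finset.mem_insert, Finset.mem_erase] at *
              rcases eq_or_ne x v with rfl | hxv
              · exact Or.inl rfl
              · exact Or.inr ⟨⟨hxv, hx.1⟩, hx.2⟩
            calc (s.filter (G.Adj u)).card ≤ _ := Finset.card_le_card this
              _ ≤ ((s.erase v).filter (G.Adj u)).card + 1 := Finset.card_insert_le _ _
          · simp only [hadj, if_false, add_zero]
            apply Finset.card_le_card
            intro x hx
            simp only [Finset.mem_filter, Finset.mem_erase] at *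
            refine ⟨⟨?_, hx.1⟩, hx.2⟩
            rintro rfl; exact hadj hx.2
        have h2 : ∑ u ∈ s.erase v, (if G.Adj u v then 1 else 0) ≤ (s.filter (G.Adj v)).card := by
          rw [Finset.card_filter]
          calc ∑ u ∈ s.erase v, (if G.Adj u v then 1 else 0)
              ≤ ∑ u ∈ s, (if G.Adj u v then 1 else 0) :=
                Finset.sum_le_sum_of_subset (Finset.erase_subset v s)
            _ = ∑ u ∈ s, (if G.Adj v u then 1 else 0) := by
                apply Finset.sum_congr rfl; intro u _
                simp [G.adj_comm]
        calc (s.filter (G.Adj v)).card + ∑ u ∈ s.erase v, (s.filter (G.Adj u)).card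
            ≤ (s.filter (G.Adj v)).card + ∑ u ∈ s.erase v,
              (((s.erase v).filter (G.Adj u)).card + (if G.Adj u v then 1 else 0)) := by
              gcongr with u hu; exact h1 u hu
          _ ≤ _ := by
              rw [Finset.sum_add_distrib]
              omega
      -- now the real-number bookkeeping
      have hcard : (s.card : ℝ) = (s.erase v).card + 1 := by
        rw [Finset.card_erase_of_mem hv]
        have : 1 ≤ s.card := Finset.card_pos.mpr ⟨v, hv⟩
        rw [Nat.cast_sub this]
        ring
      -- cast key to ℝ
      have keyR : (∑ u ∈ s, ((s.filter (G.Adj u)).card : ℝ)) ≤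
          (∑ u ∈ s.erase v, (((s.erase v).filter (G.Adj u)).card : ℝ))
            + 2 * ((s.filter (G.Adj v)).card : ℝ) := by
        have := key
        push_cast
        exact_mod_cast this
      set K : ℝ := ((s.erase v).card : ℝ) with hK
      set m : ℝ := (s'.card : ℝ)
      have h2d : ((s.filter (G.Adj v)).card : ℝ) ≤ c' * (K + 1) := by
        rw [← hcard] at *
        exact le_of_lt (by exact_mod_cast hdv) |>.trans (le_of_eq (by rw [hcard]))
      calc (∑ u ∈ s, ((s.filter (G.Adj u)).card : ℝ))
            - c' * ((s.card : ℝ) * ((s.card : ℝ) + 1) - m * (m + 1))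
          ≤ (∑ u ∈ s.erase v, (((s.erase v).filter (G.Adj u)).card : ℝ))
              + 2 * c' * (K + 1)
            - c' * ((K + 1) * (K + 2) - m * (m + 1)) := by
            rw [hcard]
            nlinarith [keyR, h2d]
        _ = (∑ u ∈ s.erase v, (((s.erase v).filter (G.Adj u)).card : ℝ))
            - c' * (K * (K + 1) - m * (m + 1)) := by ring
        _ ≤ _ := hbound


set_option maxHeartbeats 1000000 in
lemma esp (r : ℕ) : ∀ (t : ℕ) (ε : ℝ), 0 < ε →
    ∃ n₀ : ℕ, ∀ (n : ℕ) (G : SimpleGraph (Fin n)) [DecidableRel G.Adj] (s : Finset (Fin n)),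
      n₀ ≤ s.card →
      (∀ v ∈ s, (((r : ℝ) - 1) / r + ε) * s.card ≤ ((s.filter (G.Adj v)).card : ℝ)) →
      ∃ f : Fin (r + 1) × Fin t → Fin n, Function.Injective f ∧ (∀ p, f p ∈ s) ∧
        ∀ ⦃p q : Fin (r + 1) × Fin t⦄, (blowup (r + 1) t).Adj p q → G.Adj (f p) (f q) := by
  induction r with
  | zero =>
    intro t ε hε
    refine ⟨t, fun n G _ s hst _ => ?_⟩
    obtain ⟨s₁, hs₁sub, hs₁card⟩ := Finset.exists_subset_card_eq hst
    let e := s₁.orderIsoOfFin hs₁card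
    refine ⟨fun p => ↑(e p.2), ?_, fun p => hs₁sub (e p.2).2, ?_⟩
    · intro p q hpq
      have h2 : p.2 = q.2 := e.injective (Subtype.ext hpq)
      have h1 : p.1 = q.1 := Fin.ext (by omega)
      exact Prod.ext h1 h2
    · intro p q hpq
      exact absurd (Fin.ext (by omega) : p.1 = q.1) hpq
  | succ r IH =>
    intro t ε hε
    rcases Nat.eq_zero_or_pos t with rfl | ht
    · exact ⟨0, fun n G _ s _ _ =>
        ⟨fun p => p.2.elim0, fun a => a.2.elim0, fun a => a.2.elim0, fun a => a.2.elim0⟩⟩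
    -- parameters
    set M : ℕ := Nat.ceil (2 / ε) + 1 with hM
    set T : ℕ := t * M with hT
    obtain ⟨n₁, hn₁⟩ := IH T ε hε
    set E : ℕ := 2 ^ ((r + 1) * T) with hE
    set N₂ : ℕ := Nat.ceil (((E * t : ℕ) : ℝ) * 2 / ε) + 1 with hN₂
    refine ⟨max n₁ N₂, fun n G _ s hst hyp => ?_⟩
    have hK0 : (0:ℝ) ≤ s.card := Nat.cast_nonneg _
    -- inner application
    have hyp' : ∀ v ∈ s, (((r : ℝ) - 1) / r + ε) * s.card ≤ ((s.filter (G.Adj v)).card : ℝ) := by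
      intro v hv
      have h0 : ((r : ℝ) - 1) / r ≤ ((r : ℝ) + 1 - 1) / ((r:ℝ) + 1) := by
        rcases Nat.eq_zero_or_pos r with rfl | hr
        · norm_num
        · have hr1 : (1:ℝ) ≤ r := by exact_mod_cast hr
          rw [div_le_div_iff₀ (by linarith) (by linarith)]
          nlinarith
      have h1 := hyp v hv
      push_cast at h1 ⊢
      exact le_trans (mul_le_mul_of_nonneg_right (by linarith) hK0) h1
    obtain ⟨f, hfinj, hfs, hfadj⟩ := hn₁ n G s (le_trans (le_max_left _ _) hst) (by
      intro v hv; exact_mod_cast hyp' v hv)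
    -- the r+1 parts
    set W : Fin (r + 1) → Finset (Fin n) := fun i => Finset.univ.image (fun j : Fin T => f (i, j))
      with hW
    have hWcard : ∀ i, (W i).card = T := by
      intro i
      rw [hW]
      rw [Finset.card_image_of_injective _ (fun j j' h => by
        have := hfinj h; exact (Prod.mk.injEq _ _ _ _ ▸ this).2)]
      simp
    have hWmem : ∀ i x, x ∈ W i → ∃ j, f (i, j) = x := by
      intro i x hx
      simp only [hW, Finset.mem_image, Finset.mem_univ, true_and] at hx
      exact hx
    have hWs : ∀ i x, x ∈ W i → x ∈ s := by
      intro i x hx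
      obtain ⟨j, rfl⟩ := hWmem i x hx
      exact hfs (i, j)
    -- useful vertices
    set U : Finset (Fin n) := s.filter (fun v => ∀ i, t ≤ ((W i).filter (G.Adj v)).card) with hU
    have hUs : U ⊆ s := Finset.filter_subset _ _
    -- the total count
    set A : ℕ := ∑ v ∈ s, ∑ i : Fin (r + 1), ((W i).filter (G.Adj v)).card with hA
    have hA1 : ((r : ℝ) + 1) * T * ((((r:ℝ)+1-1) / ((r:ℝ)+1) + ε) * s.card) ≤ A := by
      have hswap : A = ∑ i : Fin (r + 1), ∑ w ∈ W i, (s.filter (G.Adj w)).card := by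
        rw [hA, Finset.sum_comm]
        exact Finset.sum_congr rfl fun i _ => sum_filter_adj_comm G s (W i)
      rw [hswap]
      push_cast
      have hper : ∀ i : Fin (r + 1),
          (T : ℝ) * ((((r:ℝ)+1-1) / ((r:ℝ)+1) + ε) * s.card)
            ≤ ∑ w ∈ W i, ((s.filter (G.Adj w)).card : ℝ) := by
        intro i
        have := Finset.sum_le_sum (f := fun w : Fin n => (((r:ℝ)+1-1) / ((r:ℝ)+1) + ε) * s.card)
          (g := fun w => ((s.filter (G.Adj w)).card : ℝ))
          (fun w hw => by
            have h1 := hyp w (hWs i w hw)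
            push_cast at h1
            exact h1)
        rw [Finset.sum_const, hWcard i, nsmul_eq_mul] at this
        linarith
      calc ((r : ℝ) + 1) * T * ((((r:ℝ)+1-1) / ((r:ℝ)+1) + ε) * s.card)
          = ∑ _i : Fin (r+1), (T:ℝ) * ((((r:ℝ)+1-1) / ((r:ℝ)+1) + ε) * s.card) := by
            rw [Finset.sum_const]; simp; ring
        _ ≤ _ := Finset.sum_le_sum fun i _ => hper i
    have hA2 : (A : ℝ) ≤ U.card * (((r:ℝ)+1) * T) + s.card * ((r:ℝ) * T + t) := by
      have hsplit : A = (∑ v ∈ U, ∑ i : Fin (r + 1), ((W i).filter (G.Adj v)).card)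
          + ∑ v ∈ s.filter (fun v => ¬ (∀ i, t ≤ ((W i).filter (G.Adj v)).card)),
              ∑ i : Fin (r + 1), ((W i).filter (G.Adj v)).card := by
        rw [hA, hU, Finset.sum_filter_add_sum_filter_not]
      have hb1 : ∀ v, ∑ i : Fin (r + 1), ((W i).filter (G.Adj v)).card ≤ (r + 1) * T := by
        intro v
        calc ∑ i : Fin (r + 1), ((W i).filter (G.Adj v)).card
            ≤ ∑ _i : Fin (r + 1), T := Finset.sum_le_sum fun i _ => by
              rw [← hWcard i]; exact Finset.card_le_card (Finset.filter_subset _ _)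
          _ = (r + 1) * T := by simp [Finset.sum_const, mul_comm]
      have hb2 : ∀ v ∈ s.filter (fun v => ¬ (∀ i, t ≤ ((W i).filter (G.Adj v)).card)),
          ∑ i : Fin (r + 1), ((W i).filter (G.Adj v)).card ≤ r * T + t := by
        intro v hv
        rw [Finset.mem_filter] at hv
        push_neg at hv
        obtain ⟨i₀, hi₀⟩ := hv.2
        rw [← Finset.sum_erase_add _ _ (Finset.mem_univ i₀)]
        have h1 : ∑ i ∈ Finset.univ.erase i₀, ((W i).filter (G.Adj v)).card ≤ r * T := by
          calc ∑ i ∈ Finset.univ.erase i₀, ((W i).filter (G.Adj v)).card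
              ≤ ∑ _i ∈ Finset.univ.erase i₀, T := Finset.sum_le_sum fun i _ => by
                rw [← hWcard i]; exact Finset.card_le_card (Finset.filter_subset _ _)
            _ = r * T := by
                rw [Finset.sum_const, Finset.card_erase_of_mem (Finset.mem_univ _)]
                simp [mul_comm]
        omega
      have hn1 : (∑ v ∈ U, ∑ i : Fin (r + 1), ((W i).filter (G.Adj v)).card) ≤ U.card * ((r+1) * T) :=
        Finset.sum_le_card_nsmul _ _ _ fun v _ => hb1 v
      have hn2 : (∑ v ∈ s.filter (fun v => ¬ (∀ i, t ≤ ((W i).filter (G.Adj v)).card)),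
          ∑ i : Fin (r + 1), ((W i).filter (G.Adj v)).card) ≤ s.card * (r * T + t) := by
        calc _ ≤ (s.filter (fun v => ¬ (∀ i, t ≤ ((W i).filter (G.Adj v)).card))).card * (r * T + t) :=
              Finset.sum_le_card_nsmul _ _ _ hb2
          _ ≤ s.card * (r * T + t) :=
              Nat.mul_le_mul_right _ (Finset.card_le_card (Finset.filter_subset _ _))
      have := hsplit ▸ Nat.add_le_add hn1 hn2
      push_cast
      exact_mod_cast this
    -- |U| ≥ (ε/2) * |s|
    have hTM : (T : ℝ) = t * M := by exact_mod_cast congrArg Nat.cast hT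
    have hM2 : (2:ℝ) / ε ≤ M := by
      rw [hM]; push_cast
      exact le_trans (Nat.le_ceil _) (by norm_num)
    have hUbig : (ε / 2) * s.card ≤ U.card := by
      have hp : (0:ℝ) < (r:ℝ) + 1 := by positivity
      have hexp : ((r : ℝ) + 1) * T * ((((r:ℝ)+1-1) / ((r:ℝ)+1) + ε) * s.card)
          = (r:ℝ) * T * s.card + ((r:ℝ)+1) * T * ε * s.card := by
        field_simp
        ring
      have ht1 : (1:ℝ) ≤ t := by exact_mod_cast ht
      have hT0 : (0:ℝ) < T := by
        rw [hTM]; positivity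
      have htT : (t : ℝ) ≤ ((r:ℝ)+1) * T * ε / 2 := by
        rw [hTM]
        have hM2' : (2:ℝ) ≤ ε * M := by
          rw [div_le_iff₀ hε] at hM2; linarith
        have hrr : (1:ℝ) ≤ (r:ℝ) + 1 := by
          have : (0:ℝ) ≤ (r:ℝ) := Nat.cast_nonneg r
          linarith
        have ht0 : (0:ℝ) ≤ t := Nat.cast_nonneg t
        have h3 : 2 * (t:ℝ) ≤ t * (ε * M) := by nlinarith
        have h4 : (t:ℝ) * (ε * M) ≤ ((r:ℝ)+1) * (t * (ε * M)) :=
          le_mul_of_one_le_left (by nlinarith) hrr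
        calc (t:ℝ) = t * 1 := by ring
          _ ≤ ((r:ℝ)+1) * (t * M) * ε / 2 := by nlinarith [h3, h4]
      have e1 : (r:ℝ)*T*s.card + ((r:ℝ)+1)*T*ε*s.card ≤ (A:ℝ) := by
        rw [hexp] at hA1; linarith
      have e2 : ((s.card:ℝ)*t : ℝ) ≤ (s.card:ℝ) * (((r:ℝ)+1)*T*ε/2) :=
        mul_le_mul_of_nonneg_left htT hK0
      have e3 : ((r:ℝ)+1)*T*((ε/2)*s.card) ≤ ((r:ℝ)+1)*T*(U.card:ℝ) := by
        nlinarith [hA2, e1, e2]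
      exact le_of_mul_le_mul_left e3 (mul_pos hp hT0)
    -- signatures
    set σ : Fin n → Fin (r + 1) → Finset (Fin n) := fun v i =>
      if h : t ≤ ((W i).filter (G.Adj v)).card then
        Classical.choose (Finset.exists_subset_card_eq h) else ∅ with hσ
    have hσspec : ∀ v ∈ U, ∀ i, σ v i ⊆ (W i).filter (G.Adj v) ∧ (σ v i).card = t := by
      intro v hv i
      rw [hU, Finset.mem_filter] at hv
      have h := hv.2 i
      rw [hσ]
      simp only [dif_pos h]
      exact Classical.choose_spec (Finset.exists_subset_card_eq h)
    set B : Finset (Fin (r + 1) → Finset (Fin n)) :=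
      Finset.univ.filter (fun g => ∀ i, g i ⊆ W i ∧ (g i).card = t) with hB
    have hmaps : ∀ v ∈ U, σ v ∈ B := by
      intro v hv
      rw [hB, Finset.mem_filter]
      exact ⟨Finset.mem_univ _, fun i =>
        ⟨(hσspec v hv i).1.trans (Finset.filter_subset _ _), (hσspec v hv i).2⟩⟩
    have hBcard : B.card ≤ E := by
      have main : ∀ g ∈ B, ∀ g' ∈ B,
          (Finset.univ.filter (fun q : Fin (r+1) × Fin T => f q ∈ g q.1))
            = (Finset.univ.filter (fun q : Fin (r+1) × Fin T => f q ∈ g' q.1)) →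
          ∀ i x, x ∈ g i → x ∈ g' i := by
        intro g hg g' hg' heq i x hx
        rw [hB, Finset.mem_filter] at hg
        have hxW : x ∈ W i := (hg.2 i).1 hx
        obtain ⟨j, rfl⟩ := hWmem i x hxW
        have hmem : (i, j) ∈ Finset.univ.filter (fun q : Fin (r+1) × Fin T => f q ∈ g q.1) := by
          simp only [Finset.mem_filter, Finset.mem_univ, true_and]
          exact hx
        rw [heq] at hmem
        simpa using hmem
      have hinj : Set.InjOn (fun g : Fin (r+1) → Finset (Fin n) =>
          Finset.univ.filter (fun q : Fin (r+1) × Fin T => f q ∈ g q.1)) B := by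
        intro g hg g' hg' heq
        funext i
        ext x
        exact ⟨main g hg g' hg' heq i x, main g' hg' g hg heq.symm i x⟩
      calc B.card ≤ (Finset.univ : Finset (Finset (Fin (r+1) × Fin T))).card :=
            Finset.card_le_card_of_injOn _ (fun g _ => Finset.mem_univ _) hinj
        _ = E := by
            rw [Finset.card_univ, Fintype.card_finset, hE]
            congr 1
            simp [Fintype.card_prod]
    have hUE : E * t ≤ U.card := by
      have hsN : (N₂ : ℝ) ≤ s.card := by
        exact_mod_cast le_trans (le_max_right _ _) hst
      have h2 : ((E*t:ℕ):ℝ) * 2 / ε ≤ N₂ := by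
        rw [hN₂]; push_cast
        exact (Nat.le_ceil _).trans (by norm_num)
      rw [div_le_iff₀ hε] at h2
      have h3 : ((E*t:ℕ):ℝ) ≤ (ε/2) * s.card := by nlinarith
      exact_mod_cast h3.trans hUbig
    have hE1 : 1 ≤ E := Nat.one_le_two_pow
    have hlt : B.card * (t - 1) < U.card := by
      calc B.card * (t - 1) ≤ E * (t - 1) := Nat.mul_le_mul_right _ hBcard
        _ < E * t := by
            have hmul : E * (t - 1) + E = E * t := by
              rw [← Nat.mul_succ]; congr 1; omega
            omega
        _ ≤ U.card := hUE
    obtain ⟨g, hgB, hgfib⟩ := Finset.exists_lt_card_fiber_of_mul_lt_card_of_maps_to hmaps hlt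
    have hfib : t ≤ (U.filter (fun v => σ v = g)).card := by omega
    obtain ⟨Vt, hVtsub, hVtcard⟩ := Finset.exists_subset_card_eq hfib
    set u := Vt.orderIsoOfFin hVtcard with hu
    have hgW : ∀ i, g i ⊆ W i ∧ (g i).card = t := by
      rw [hB, Finset.mem_filter] at hgB; exact hgB.2
    set e : ∀ i : Fin (r+1), Fin t ≃o {x // x ∈ g i} := fun i => (g i).orderIsoOfFin (hgW i).2
      with he
    have huU : ∀ j : Fin t, (u j : Fin n) ∈ U ∧ σ (u j) = g := by
      intro j
      have := hVtsub (u j).2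
      rw [Finset.mem_filter] at this
      exact this
    have hadj_ug : ∀ (j : Fin t) (i : Fin (r+1)) (x : Fin n), x ∈ g i → G.Adj (u j) x := by
      intro j i x hx
      obtain ⟨hU', hσg⟩ := huU j
      rw [← hσg] at hx
      have := (hσspec _ hU' i).1 hx
      exact (Finset.mem_filter.mp this).2
    have hgmem : ∀ (i : Fin (r+1)) (x : Fin n), x ∈ g i → ∃ j, f (i, j) = x := by
      intro i x hx
      exact hWmem i x ((hgW i).1 hx)
    refine ⟨fun q : Fin (r+2) × Fin t =>
      if h : (q.1 : ℕ) < r + 1 then ↑(e ⟨(q.1 : ℕ), h⟩ q.2) else ↑(u q.2), ?_, ?_, ?_⟩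
    · -- injectivity
      intro q q' heq
      dsimp only at heq
      by_cases h1 : (q.1 : ℕ) < r + 1 <;> by_cases h2 : (q'.1 : ℕ) < r + 1
      · rw [dif_pos h1, dif_pos h2] at heq
        by_cases hii : (⟨(q.1:ℕ), h1⟩ : Fin (r+1)) = ⟨(q'.1:ℕ), h2⟩
        · have hj : q.2 = q'.2 := by
            apply (e ⟨(q.1:ℕ), h1⟩).injective
            apply Subtype.ext
            rw [heq, hii]
          have hi : q.1 = q'.1 := by
            have := congrArg Fin.val hii
            exact Fin.ext this
          exact Prod.ext hi hj
        · exfalso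
          obtain ⟨j₁, hj₁⟩ := hgmem _ _ (e ⟨(q.1:ℕ), h1⟩ q.2).2
          obtain ⟨j₂, hj₂⟩ := hgmem _ _ (e ⟨(q'.1:ℕ), h2⟩ q'.2).2
          have hff : f (⟨(q.1:ℕ), h1⟩, j₁) = f (⟨(q'.1:ℕ), h2⟩, j₂) := by
            rw [hj₁, hj₂]; exact heq
          exact hii (congrArg Prod.fst (hfinj hff))
      · rw [dif_pos h1, dif_neg h2] at heq
        exfalso
        have hadj := hadj_ug q'.2 _ _ (e ⟨(q.1:ℕ), h1⟩ q.2).2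
        exact G.ne_of_adj hadj heq.symm
      · rw [dif_neg h1, dif_pos h2] at heq
        exfalso
        have hadj := hadj_ug q.2 _ _ (e ⟨(q'.1:ℕ), h2⟩ q'.2).2
        exact G.ne_of_adj hadj heq
      · rw [dif_neg h1, dif_neg h2] at heq
        have hj : q.2 = q'.2 := u.injective (Subtype.ext heq)
        have hi : q.1 = q'.1 := by
          have b1 := q.1.isLt
          have b2 := q'.1.isLt
          exact Fin.ext (by omega)
        exact Prod.ext hi hj
    · -- membership in s
      intro p
      dsimp only
      by_cases h1 : (p.1 : ℕ) < r + 1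
      · rw [dif_pos h1]
        exact hWs _ _ ((hgW _).1 (e ⟨(p.1:ℕ), h1⟩ p.2).2)
      · rw [dif_neg h1]
        exact hUs (huU p.2).1
    · -- adjacency
      intro p q hpq
      have hpq' : (p.1 : ℕ) ≠ (q.1 : ℕ) := fun h => hpq (Fin.ext h)
      dsimp only
      by_cases h1 : (p.1 : ℕ) < r + 1 <;> by_cases h2 : (q.1 : ℕ) < r + 1
      · rw [dif_pos h1, dif_pos h2]
        obtain ⟨j₁, hj₁⟩ := hgmem _ _ (e ⟨(p.1:ℕ), h1⟩ p.2).2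
        obtain ⟨j₂, hj₂⟩ := hgmem _ _ (e ⟨(q.1:ℕ), h2⟩ q.2).2
        rw [← hj₁, ← hj₂]
        apply hfadj
        show (⟨(p.1:ℕ), h1⟩ : Fin (r+1)) ≠ ⟨(q.1:ℕ), h2⟩
        intro hcon
        exact hpq' (by simpa using congrArg Fin.val hcon)
      · rw [dif_pos h1, dif_neg h2]
        exact (hadj_ug q.2 _ _ (e ⟨(p.1:ℕ), h1⟩ p.2).2).symm
      · rw [dif_neg h1, dif_pos h2]
        exact hadj_ug p.2 _ _ (e ⟨(q.1:ℕ), h2⟩ q.2).2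
      · exfalso
        have b1 := p.1.isLt
        have b2 := q.1.isLt
        exact hpq' (by omega)

lemma containsCopy_trans {α β γ} {F : SimpleGraph α} {G : SimpleGraph β} {H : SimpleGraph γ}
    (h1 : ContainsCopy F G) (h2 : ContainsCopy G H) : ContainsCopy F H := by
  obtain ⟨f, hf, hfa⟩ := h1
  obtain ⟨g, hg, hga⟩ := h2
  exact ⟨g ∘ f, hg.comp hf, fun a b hab => hga (hfa hab)⟩

set_option maxHeartbeats 1000000 in
lemma es_upper (r t : ℕ) (hr : 1 ≤ r) (ε : ℝ) (hε : 0 < ε) :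
    ∃ n₀ : ℕ, ∀ (n : ℕ) (G : SimpleGraph (Fin n)) [DecidableRel G.Adj], n₀ ≤ n →
      ((((r : ℝ) - 1) / r + ε) * ((n : ℝ) * ((n : ℝ) - 1) / 2) ≤ (G.edgeFinset.card : ℝ)) →
      ∃ f : Fin (r + 1) × Fin t → Fin n, Function.Injective f ∧
        ∀ ⦃p q : Fin (r + 1) × Fin t⦄, (blowup (r + 1) t).Adj p q → G.Adj (f p) (f q) := by
  obtain ⟨n₁, hn₁⟩ := esp r t (ε / 2) (by positivity)
  set N₃ : ℕ := Nat.ceil ((2 * ε + 8) / ε) with hN₃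
  set N₄ : ℕ := Nat.ceil (4 * (((n₁ : ℝ)) ^ 2 + 1) / ε) with hN₄
  refine ⟨max 2 (max N₃ N₄), fun n G _ hn he => ?_⟩
  have hn2 : 2 ≤ n := le_trans (le_max_left _ _) hn
  have hc0 : (0 : ℝ) ≤ ((r : ℝ) - 1) / r := by
    apply div_nonneg _ (Nat.cast_nonneg r)
    have : (1:ℝ) ≤ r := by exact_mod_cast hr
    linarith
  have hCpos : (0:ℝ) < (n : ℝ) * ((n:ℝ) - 1) / 2 := by
    have : (2:ℝ) ≤ n := by exact_mod_cast hn2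
    nlinarith
  -- edges at most C(n,2)
  have hemax : (G.edgeFinset.card : ℝ) ≤ (n : ℝ) * ((n:ℝ) - 1) / 2 := by
    have h1 := SimpleGraph.card_edgeFinset_le_card_choose_two (G := G)
    have h2 : ((Fintype.card (Fin n)).choose 2 : ℝ) = (n : ℝ) * ((n:ℝ) - 1) / 2 := by
      rw [Fintype.card_fin, Nat.cast_choose_two]
    calc (G.edgeFinset.card : ℝ) ≤ ((Fintype.card (Fin n)).choose 2 : ℝ) := by exact_mod_cast h1
      _ = _ := h2
  have hc1 : ((r : ℝ) - 1) / r + ε ≤ 1 := by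
    by_contra hcon
    push_neg at hcon
    nlinarith
  set c' : ℝ := ((r : ℝ) - 1) / r + ε / 2 with hc'
  have hc'0 : 0 ≤ c' := by rw [hc']; positivity
  have hc'1 : c' ≤ 1 := by rw [hc']; linarith
  clear_value c'
  obtain ⟨s', hsub, hmin, hbound⟩ := peel G c' hc'0 Finset.univ
  -- identify D(univ) with twice the edge count
  have hDuniv : ∑ v ∈ Finset.univ, ((Finset.univ.filter (G.Adj v)).card : ℝ)
      = 2 * (G.edgeFinset.card : ℝ) := by
    have h1 : ∑ v, G.degree v = 2 * G.edgeFinset.card := G.sum_degrees_eq_twice_card_edges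
    have h2 : ∀ v : Fin n, (Finset.univ.filter (G.Adj v)).card = G.degree v := by
      intro v
      rw [SimpleGraph.degree, SimpleGraph.neighborFinset_eq_filter]
    push_cast [h2]
    exact_mod_cast congrArg (Nat.cast : ℕ → ℝ) h1
  set m : ℕ := s'.card with hm
  clear_value m
  have hcardn : (Finset.univ : Finset (Fin n)).card = n := by simp
  -- D(s') ≤ m^2
  have hDm : ∑ v ∈ s', ((s'.filter (G.Adj v)).card : ℝ) ≤ (m : ℝ) * m := by
    calc ∑ v ∈ s', ((s'.filter (G.Adj v)).card : ℝ) ≤ ∑ _v ∈ s', (m : ℝ) := by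
          apply Finset.sum_le_sum
          intro v _
          rw [hm]
          exact_mod_cast Finset.card_le_card (Finset.filter_subset _ _)
      _ = (m:ℝ) * m := by rw [Finset.sum_const, nsmul_eq_mul, hm]
  -- combine
  have hN₃n : ((2 * ε + 8) / ε) ≤ (n:ℝ) := by
    have h0 : N₃ ≤ n := le_trans (le_max_left _ _) (le_trans (le_max_right _ _) hn)
    calc _ ≤ (N₃:ℝ) := Nat.le_ceil _
      _ ≤ (n:ℝ) := by exact_mod_cast h0
  have hkey : (ε / 4) * (n:ℝ) ^ 2 ≤ (m : ℝ) ^ 2 := by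
    rw [hcardn] at hbound
    have h2e : (((r : ℝ) - 1) / r + ε) * ((n : ℝ) * ((n:ℝ) - 1)) ≤
        ∑ v ∈ Finset.univ, ((Finset.univ.filter (G.Adj v)).card : ℝ) := by
      rw [hDuniv]; linarith
    have hmn : (m : ℝ) ≤ n := by
      have h6 := Finset.card_le_card hsub
      rw [hcardn, ← hm] at h6
      exact_mod_cast h6
    have hn0 : (0:ℝ) ≤ n := Nat.cast_nonneg n
    have hm0 : (0:ℝ) ≤ m := Nat.cast_nonneg m
    have hεn : (2 * ε + 8) ≤ ε * n := by
      rw [div_le_iff₀ hε] at hN₃n; linarith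
    have hx1 : (0:ℝ) ≤ c' * ((m:ℝ) * ((m:ℝ)+1)) :=
      mul_nonneg hc'0 (mul_nonneg hm0 (by linarith))
    have hx2 : (2 * ε + 8) * (n:ℝ) ≤ (ε * n) * n := mul_le_mul_of_nonneg_right hεn hn0
    have hx3 : c' * (n:ℝ) ≤ 1 * n := mul_le_mul_of_nonneg_right hc'1 hn0
    have h2e' : (c' + ε/2) * ((n : ℝ) * ((n:ℝ) - 1)) ≤
        ∑ v ∈ Finset.univ, ((Finset.univ.filter (G.Adj v)).card : ℝ) := by
      have hcc : c' + ε/2 = ((r : ℝ) - 1) / r + ε := by rw [hc']; ring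
      rw [hcc]; exact h2e
    nlinarith [hbound, hDm, h2e', hm0, hx1, hx2, hx3]
  have hmn₁ : n₁ ≤ m := by
    by_contra hcon
    push_neg at hcon
    have h1 : (m:ℝ) ^ 2 ≤ (n₁ : ℝ) ^ 2 := by
      have : (m:ℝ) ≤ n₁ := by exact_mod_cast le_of_lt hcon
      nlinarith [Nat.cast_nonneg (α := ℝ) m]
    have hN₄n : 4 * (((n₁ : ℝ)) ^ 2 + 1) / ε ≤ (n:ℝ) := by
      have h0 : N₄ ≤ n := le_trans (le_max_right _ _) (le_trans (le_max_right _ _) hn)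
      calc _ ≤ (N₄:ℝ) := Nat.le_ceil _
        _ ≤ (n:ℝ) := by exact_mod_cast h0
    have hn1' : (1:ℝ) ≤ n := by
      have : (2:ℝ) ≤ n := by exact_mod_cast hn2
      linarith
    rw [div_le_iff₀ hε] at hN₄n
    have : (ε/4) * (n:ℝ)^2 ≥ (n₁:ℝ)^2 + 1 := by nlinarith
    nlinarith [hkey]
  rw [hm] at hmn₁
  obtain ⟨f, hfinj, _, hfadj⟩ := hn₁ n G s' hmn₁ (by
    intro v hv
    have h5 := hmin v hv
    rw [hm] at h5
    exact h5)
  exact ⟨f, hfinj, hfadj⟩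

lemma turan_lower (r n : ℕ) (hr : 1 ≤ r) :
    (((r : ℝ) - 1) / r) * ((n : ℝ) * ((n : ℝ) - 1) / 2)
      ≤ ((turanGraph n r).edgeFinset.card : ℝ) := by
  rcases Nat.eq_zero_or_pos n with rfl | hn
  · norm_num
  set q : ℕ := (n - 1) / r with hq
  have hr0 : (0:ℝ) < r := by exact_mod_cast hr
  -- same-residue class is small
  have step1 : ∀ v : Fin n,
      (Finset.univ.filter (fun w : Fin n => ¬ (turanGraph n r).Adj v w)).card ≤ q + 1 := by
    intro v
    have : (Finset.univ.filter (fun w : Fin n => ¬ (turanGraph n r).Adj v w)).card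
        ≤ (Finset.univ : Finset (Fin (q + 1))).card := by
      apply Finset.card_le_card_of_injOn (fun w => ⟨(w : ℕ) / r, by
        have hw : (w : ℕ) ≤ n - 1 := by omega
        have h9 : (w : ℕ) / r ≤ q := by
          rw [hq]; exact Nat.div_le_div_right hw
        omega⟩)
      · intro w _; exact Finset.mem_univ _
      · intro w₁ h₁ w₂ h₂ heq
        simp only [Finset.mem_coe, Finset.mem_filter, turanGraph, not_not] at h₁ h₂
        have hdiv : (w₁ : ℕ) / r = (w₂ : ℕ) / r := congrArg Fin.val heq
        have hmod : (w₁ : ℕ) % r = (w₂ : ℕ) % r := by rw [← h₁.2, ← h₂.2]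
        have e₁ := Nat.div_add_mod (w₁ : ℕ) r
        have e₂ := Nat.div_add_mod (w₂ : ℕ) r
        apply Fin.ext
        rw [← e₁, ← e₂, hdiv, hmod]
    simpa using this
  -- degree lower bound
  have step2 : ∀ v : Fin n, ((n : ℝ) - 1) - q ≤ ((turanGraph n r).degree v : ℝ) := by
    intro v
    have hsplit := Finset.card_filter_add_card_filter_not
      (s := (Finset.univ : Finset (Fin n))) (p := fun w => (turanGraph n r).Adj v w)
    have hdeg : (turanGraph n r).degree v
        = (Finset.univ.filter (fun w => (turanGraph n r).Adj v w)).card := by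
      rw [SimpleGraph.degree, SimpleGraph.neighborFinset_eq_filter]
    have h1 := step1 v
    rw [Finset.card_univ, Fintype.card_fin] at hsplit
    have : n ≤ (turanGraph n r).degree v + (q + 1) := by omega
    have := (Nat.cast_le (α := ℝ)).mpr this
    push_cast at this
    linarith
  -- sum up
  have hsum : ((n:ℝ)) * (((n : ℝ) - 1) - q) ≤ 2 * ((turanGraph n r).edgeFinset.card : ℝ) := by
    have h1 : ∑ v, (turanGraph n r).degree v = 2 * (turanGraph n r).edgeFinset.card :=
      SimpleGraph.sum_degrees_eq_twice_card_edges _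
    have h2 : ((n:ℝ)) * (((n : ℝ) - 1) - q) ≤ ∑ v : Fin n, ((turanGraph n r).degree v : ℝ) := by
      calc ((n:ℝ)) * (((n : ℝ) - 1) - q) = ∑ _v : Fin n, (((n : ℝ) - 1) - q) := by
            rw [Finset.sum_const, Finset.card_univ, Fintype.card_fin, nsmul_eq_mul]
        _ ≤ _ := Finset.sum_le_sum fun v _ => step2 v
    calc ((n:ℝ)) * (((n : ℝ) - 1) - q) ≤ ∑ v : Fin n, ((turanGraph n r).degree v : ℝ) := h2
      _ = 2 * ((turanGraph n r).edgeFinset.card : ℝ) := by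
          exact_mod_cast congrArg (Nat.cast : ℕ → ℝ) h1
  -- conclude
  have hq' : (q : ℝ) * r ≤ (n : ℝ) - 1 := by
    have h1 : q * r ≤ n - 1 := Nat.div_mul_le_self _ _
    have h2 := (Nat.cast_le (α := ℝ)).mpr h1
    push_cast at h2
    have : ((n - 1 : ℕ) : ℝ) = (n : ℝ) - 1 := by
      have : 1 ≤ n := hn
      push_cast [Nat.cast_sub this]
      ring
    rw [this] at h2
    exact h2
  rw [div_mul_eq_mul_div, div_le_iff₀ hr0]
  have hn0 : (0:ℝ) ≤ n := Nat.cast_nonneg n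
  nlinarith [hsum, hq', hn0, mul_le_mul_of_nonneg_right hq' hn0]

lemma turan_free {α : Type u} [Fintype α] (F : SimpleGraph α) (χ : ℕ)
    (hχ : F.chromaticNumber = χ) (r n : ℕ) (hr : 1 ≤ r) (hrχ : r < χ) :
    ¬ ContainsCopy F (turanGraph n r) := by
  rintro ⟨f, -, hadj⟩
  have C : F.Coloring (Fin r) := SimpleGraph.Coloring.mk
    (fun a => ⟨((f a) : ℕ) % r, Nat.mod_lt _ hr⟩)
    (by
      intro a b hab
      have := hadj hab
      simp only [turanGraph] at this
      intro hcon
      exact this (by simpa using congrArg Fin.val hcon))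
  have hcol : F.Colorable r := by
    have := C.colorable
    simpa using this
  have := hcol.chromaticNumber_le
  rw [hχ] at this
  exact absurd (by exact_mod_cast this) (not_le.mpr hrχ)

lemma edgeSet_ncard_eq {n : ℕ} (G : SimpleGraph (Fin n)) [DecidableRel G.Adj] :
    G.edgeSet.ncard = G.edgeFinset.card := by
  rw [SimpleGraph.edgeFinset, Set.ncard_eq_toFinset_card']


/-- **Erdős–Simonovits theorem** (Theorem 1.5):
`ex(n, F) = ((χ(F)-2)/(χ(F)-1) + o(1)) C(n,2)` for every graph `F` with an edge. -/
theorem erdos_simonovits {α : Type u} [Fintype α] (F : SimpleGraph α)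
    (hF : F.edgeSet.Nonempty) (χ : ℕ) (hχ : F.chromaticNumber = χ)
    (ε : ℝ) (hε : 0 < ε) :
    ∃ n₀ : ℕ, ∀ n : ℕ, n₀ ≤ n →
      |(exEdges n F : ℝ) - ((χ : ℝ) - 2) / ((χ : ℝ) - 1) * (n.choose 2 : ℝ)|
        ≤ ε * (n.choose 2 : ℝ) := by
  classical
  obtain ⟨e0, he0⟩ := hF
  obtain ⟨a, b, hab⟩ : ∃ a b, F.Adj a b := by
    induction e0 using Sym2.ind with
    | _ a b => exact ⟨a, b, (SimpleGraph.mem_edgeSet F).mp he0⟩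
  have hcol1 : ¬ F.Colorable 1 := by
    rintro ⟨C⟩
    exact (C.valid hab) (Subsingleton.elim _ _)
  have hχ2 : 2 ≤ χ := by
    by_contra h
    push_neg at h
    have h1 : F.chromaticNumber ≤ 1 := by
      rw [hχ]
      exact_mod_cast Nat.lt_succ_iff.mp h
    exact hcol1 (SimpleGraph.chromaticNumber_le_iff_colorable.mp h1)
  set r : ℕ := χ - 1 with hrdef
  have hr1 : 1 ≤ r := by omega
  have hrχ : (r : ℝ) = (χ : ℝ) - 1 := by
    rw [hrdef]
    push_cast [Nat.cast_sub (by omega : 1 ≤ χ)]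
    ring
  have hrsucc : r + 1 = χ := by omega
  have hcolχ : F.Colorable χ :=
    SimpleGraph.chromaticNumber_le_iff_colorable.mp (le_of_eq hχ)
  obtain ⟨C⟩ := hcolχ
  set t : ℕ := Fintype.card α with ht
  have hFblow : ContainsCopy F (blowup χ t) := by
    refine ⟨fun a => (C a, Fintype.equivFin α a), ?_, ?_⟩
    · intro a b hab2
      exact (Fintype.equivFin α).injective (congrArg Prod.snd hab2)
    · intro a b hab2
      exact C.valid hab2
  obtain ⟨n₁, hn₁⟩ := es_upper r t hr1 ε hε
  refine ⟨n₁, fun n hn => ?_⟩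
  set S : Set ℕ := {k : ℕ | ∃ G : SimpleGraph (Fin n), ¬ ContainsCopy F G ∧ G.edgeSet.ncard = k}
    with hS
  have hexeq : exEdges n F = sSup S := rfl
  have hSne : S.Nonempty := by
    refine ⟨(⊥ : SimpleGraph (Fin n)).edgeSet.ncard, ⟨⊥, ?_, rfl⟩⟩
    rintro ⟨f, -, hadj⟩
    exact hadj hab
  have hSbdd : BddAbove S := by
    refine ⟨n.choose 2, ?_⟩
    rintro k ⟨G, -, rfl⟩
    letI : DecidableRel G.Adj := Classical.decRel _
    rw [edgeSet_ncard_eq]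
    have := SimpleGraph.card_edgeFinset_le_card_choose_two (G := G)
    rwa [Fintype.card_fin] at this
  have hchoose : (n.choose 2 : ℝ) = (n : ℝ) * ((n : ℝ) - 1) / 2 := by
    rw [Nat.cast_choose_two]
  have hC0 : (0 : ℝ) ≤ (n.choose 2 : ℝ) := Nat.cast_nonneg _
  -- lower bound
  have hlow : ((χ : ℝ) - 2) / ((χ : ℝ) - 1) * (n.choose 2 : ℝ) ≤ (exEdges n F : ℝ) := by
    have hfree : ¬ ContainsCopy F (turanGraph n r) :=
      turan_free F χ hχ r n hr1 (by omega)
    have hmem : (turanGraph n r).edgeSet.ncard ∈ S := ⟨turanGraph n r, hfree, rfl⟩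
    have hle : (turanGraph n r).edgeSet.ncard ≤ exEdges n F := by
      rw [hexeq]
      exact le_csSup hSbdd hmem
    calc ((χ : ℝ) - 2) / ((χ : ℝ) - 1) * (n.choose 2 : ℝ)
        = ((r : ℝ) - 1) / r * ((n : ℝ) * ((n : ℝ) - 1) / 2) := by rw [hchoose, hrχ]; ring
      _ ≤ ((turanGraph n r).edgeFinset.card : ℝ) := turan_lower r n hr1
      _ = ((turanGraph n r).edgeSet.ncard : ℝ) := by rw [edgeSet_ncard_eq]
      _ ≤ (exEdges n F : ℝ) := by exact_mod_cast hle
  -- upper bound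
  have hup : (exEdges n F : ℝ) ≤ (((χ : ℝ) - 2) / ((χ : ℝ) - 1) + ε) * (n.choose 2 : ℝ) := by
    have hmem : exEdges n F ∈ S := by
      rw [hexeq]
      exact Nat.sSup_mem hSne hSbdd
    obtain ⟨G, hGfree, hGcard⟩ := hmem
    letI : DecidableRel G.Adj := Classical.decRel _
    by_contra hcon
    push_neg at hcon
    have hhyp : (((r : ℝ) - 1) / r + ε) * ((n : ℝ) * ((n : ℝ) - 1) / 2)
        ≤ (G.edgeFinset.card : ℝ) := by
      have h1 : (G.edgeFinset.card : ℝ) = (exEdges n F : ℝ) := by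
        rw [← hGcard, edgeSet_ncard_eq]
      rw [h1, hrχ]
      rw [hchoose] at hcon
      have h2 : ((χ:ℝ) - 1 - 1) / ((χ:ℝ) - 1) = ((χ:ℝ) - 2) / ((χ:ℝ) - 1) := by ring_nf
      rw [h2]
      linarith
    obtain ⟨f, hfinj, hfadj⟩ := hn₁ n G hn hhyp
    have hcopy : ContainsCopy (blowup (r + 1) t) G := ⟨f, hfinj, hfadj⟩
    rw [hrsucc] at hcopy
    exact hGfree (containsCopy_trans hFblow hcopy)
  rw [abs_le]
  constructor
  · nlinarith
  · nlinarith
end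

section
/- For every integer r ≥ 2 and every real ε > 0, there exist n₀ and δ > 0 such that the following holds: if n ≥ n₀ and G is a K_{r+1}-free graph on n vertices with e(G) ≥ (1 − δ)·t_r(n), then one can delete at most ε·n² edges from G so that the resulting graph is r-partite (i.e., r-colorable). -/
open SimpleGraph

universe u v

namespace ErdosSimonovitsAux

open Finset

lemma furedi_key : ∀ (r : ℕ) {V : Type u} [Fintype V] (G : SimpleGraph V)
    [DecidableRel G.Adj],
    G.CliqueFree (r + 1) → ∃ f : V → Fin r,
      ((∑ u : V, ∑ v : V, if G.Adj u v then 1 else 0) +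
       ∑ u : V, ∑ v : V, if G.Adj u v ∧ f u = f v then 1 else 0) ≤
      ∑ u : V, ∑ v : V, if f u ≠ f v then 1 else 0 := by
  intro r
  induction r with
  | zero =>
    intro V _ G _ hG
    have hV : IsEmpty V := by
      constructor
      intro v
      exact hG {v} ⟨by simp [SimpleGraph.IsClique], by simp⟩
    exact ⟨fun v => hV.elim v, by simp [Finset.univ_eq_empty]⟩
  | succ r ih =>
    intro V _ G _ hG
    classical
    cases isEmpty_or_nonempty V with
    | inl h =>
      exact ⟨fun _ => 0, by simp [Finset.univ_eq_empty]⟩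
    | inr h =>
      obtain ⟨u, -, hu⟩ := Finset.exists_max_image Finset.univ (fun v => G.degree v)
        ⟨Classical.arbitrary V, Finset.mem_univ _⟩
      set A : Finset V := G.neighborFinset u with hA
      have hmem : ∀ x : V, x ∈ A ↔ x ∈ G.neighborSet u := fun x =>
        SimpleGraph.mem_neighborFinset G u x
      -- the induced graph on the neighborhood is (r+1)-clique-free
      have hind : (G.induce (G.neighborSet u)).CliqueFree (r + 1) := by
        intro S hS
        have hT : G.IsNClique (r + 1) (S.map (Function.Embedding.subtype _)) := by
          have h1 := hS.map (f := Function.Embedding.subtype _)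
          refine ⟨h1.1.mono ?_, h1.2⟩
          intro a b hab
          simp only [map_adj, Function.Embedding.coe_subtype] at hab
          obtain ⟨-, x, y, hxy, hx, hy⟩ := hab
          subst hx; subst hy
          exact hxy
        have : G.IsNClique (r + 2) (insert u (S.map (Function.Embedding.subtype _))) := by
          refine hT.insert ?_
          intro b hb
          simp only [Finset.mem_map, Function.Embedding.coe_subtype] at hb
          obtain ⟨⟨x, hx⟩, -, rfl⟩ := hb
          exact hx
        exact hG _ this
      obtain ⟨g, hg⟩ := ih (G.induce (G.neighborSet u)) hind
      set f : V → Fin (r + 1) := fun v =>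
        if h : v ∈ A then (g ⟨v, (hmem v).1 h⟩).castSucc else Fin.last r with hfdef
      have hfA : ∀ v (h : v ∈ A), f v = (g ⟨v, (hmem v).1 h⟩).castSucc := fun v h => dif_pos h
      have hfB : ∀ v, v ∉ A → f v = Fin.last r := fun v h => dif_neg h
      have hfcoe : ∀ x : G.neighborSet u, f ↑x = (g x).castSucc := by
        intro x
        exact hfA ↑x ((hmem ↑x).2 x.2)
      refine ⟨f, ?_⟩
      have split : ∀ F : V → V → ℕ, (∑ x : V, ∑ y : V, F x y) =
          (((∑ x ∈ A, ∑ y ∈ A, F x y) + ∑ x ∈ A, ∑ y ∈ Aᶜ, F x y) +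
           ((∑ x ∈ Aᶜ, ∑ y ∈ A, F x y) + ∑ x ∈ Aᶜ, ∑ y ∈ Aᶜ, F x y)) := by
        intro F
        rw [← Finset.sum_add_sum_compl A (fun x => ∑ y : V, F x y)]
        congr 1 <;> rw [← Finset.sum_add_distrib] <;>
          exact Finset.sum_congr rfl fun x _ => (Finset.sum_add_sum_compl A _).symm
      have subA : ∀ F : V → V → ℕ, (∑ x ∈ A, ∑ y ∈ A, F x y)
          = ∑ x : G.neighborSet u, ∑ y : G.neighborSet u, F ↑x ↑y := by
        intro F
        rw [Finset.sum_subtype A hmem]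
        exact Finset.sum_congr rfl fun x _ => Finset.sum_subtype A hmem _
      rw [split (fun x y => if G.Adj x y then 1 else 0),
          split (fun x y => if G.Adj x y ∧ f x = f y then 1 else 0),
          split (fun x y => if f x ≠ f y then 1 else 0)]
      have hadj : ∀ x y : G.neighborSet u,
          (SimpleGraph.induce (G.neighborSet u) G).Adj x y ↔ G.Adj ↑x ↑y := by
        intro x y
        simp
      have h1 : (∑ x ∈ A, ∑ y ∈ A, if G.Adj x y then 1 else 0) +
          (∑ x ∈ A, ∑ y ∈ A, if G.Adj x y ∧ f x = f y then 1 else 0) ≤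
          ∑ x ∈ A, ∑ y ∈ A, if f x ≠ f y then 1 else 0 := by
        rw [subA (fun x y => if G.Adj x y then 1 else 0),
            subA (fun x y => if G.Adj x y ∧ f x = f y then 1 else 0),
            subA (fun x y => if f x ≠ f y then 1 else 0)]
        have eD : (∑ x : G.neighborSet u, ∑ y : G.neighborSet u,
            if G.Adj ↑x ↑y then 1 else 0) = ∑ x : G.neighborSet u, ∑ y : G.neighborSet u,
            if (SimpleGraph.induce (G.neighborSet u) G).Adj x y then 1 else 0 :=
          Finset.sum_congr rfl fun x _ => Finset.sum_congr rfl fun y _ =>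
            if_congr (hadj x y).symm rfl rfl
        have eB : (∑ x : G.neighborSet u, ∑ y : G.neighborSet u,
            if G.Adj ↑x ↑y ∧ f ↑x = f ↑y then 1 else 0) =
            ∑ x : G.neighborSet u, ∑ y : G.neighborSet u,
            if (SimpleGraph.induce (G.neighborSet u) G).Adj x y ∧ g x = g y then 1 else 0 :=
          Finset.sum_congr rfl fun x _ => Finset.sum_congr rfl fun y _ =>
            if_congr (and_congr (hadj x y).symm
              (by rw [hfcoe x, hfcoe y, Fin.castSucc_inj])) rfl rfl
        have eC : (∑ x : G.neighborSet u, ∑ y : G.neighborSet u,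
            if f ↑x ≠ f ↑y then 1 else 0) =
            ∑ x : G.neighborSet u, ∑ y : G.neighborSet u, if g x ≠ g y then 1 else 0 :=
          Finset.sum_congr rfl fun x _ => Finset.sum_congr rfl fun y _ =>
            if_congr (not_congr (by rw [hfcoe x, hfcoe y, Fin.castSucc_inj])) rfl rfl
        rw [eD, eB, eC]
        exact hg
      have h2 : (∑ x ∈ A, ∑ y ∈ Aᶜ, if G.Adj x y ∧ f x = f y then 1 else 0) = 0 := by
        refine Finset.sum_eq_zero fun x hx => Finset.sum_eq_zero fun y hy => ?_
        rw [if_neg]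
        rintro ⟨-, he⟩
        rw [hfA x hx, hfB y (Finset.mem_compl.1 hy)] at he
        exact (Fin.castSucc_lt_last _).ne he
      have h3 : (∑ x ∈ Aᶜ, ∑ y ∈ A, if G.Adj x y ∧ f x = f y then 1 else 0) = 0 := by
        refine Finset.sum_eq_zero fun x hx => Finset.sum_eq_zero fun y hy => ?_
        rw [if_neg]
        rintro ⟨-, he⟩
        rw [hfB x (Finset.mem_compl.1 hx), hfA y hy] at he
        exact (Fin.castSucc_lt_last _).ne' he
      have h4 : (∑ x ∈ Aᶜ, ∑ y ∈ Aᶜ, if G.Adj x y ∧ f x = f y then 1 else 0)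
          = ∑ x ∈ Aᶜ, ∑ y ∈ Aᶜ, if G.Adj x y then 1 else 0 := by
        refine Finset.sum_congr rfl fun x hx => Finset.sum_congr rfl fun y hy => ?_
        refine if_congr ⟨fun h => h.1, fun h => ⟨h, ?_⟩⟩ rfl rfl
        rw [hfB x (Finset.mem_compl.1 hx), hfB y (Finset.mem_compl.1 hy)]
      have h5 : (∑ x ∈ A, ∑ y ∈ Aᶜ, if f x ≠ f y then 1 else 0) = #A * #Aᶜ := by
        have e : ∀ x ∈ A, (∑ y ∈ Aᶜ, if f x ≠ f y then 1 else 0) = #Aᶜ := by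
          intro x hx
          rw [Finset.sum_congr rfl fun y hy => if_pos (show f x ≠ f y by
            rw [hfA x hx, hfB y (Finset.mem_compl.1 hy)]
            exact (Fin.castSucc_lt_last _).ne)]
          simp
        rw [Finset.sum_congr rfl e]
        simp [mul_comm]
      have h6 : (∑ x ∈ Aᶜ, ∑ y ∈ A, if f x ≠ f y then 1 else 0) = #Aᶜ * #A := by
        have e : ∀ x ∈ Aᶜ, (∑ y ∈ A, if f x ≠ f y then 1 else 0) = #A := by
          intro x hx
          rw [Finset.sum_congr rfl fun y hy => if_pos (show f x ≠ f y by
            rw [hfB x (Finset.mem_compl.1 hx), hfA y hy]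
            exact (Fin.castSucc_lt_last _).ne')]
          simp
        rw [Finset.sum_congr rfl e]
        simp [mul_comm]
      have h7 : (∑ x ∈ Aᶜ, ∑ y ∈ Aᶜ, if f x ≠ f y then 1 else 0) = 0 := by
        refine Finset.sum_eq_zero fun x hx => Finset.sum_eq_zero fun y hy => ?_
        rw [if_neg]
        rw [hfB x (Finset.mem_compl.1 hx), hfB y (Finset.mem_compl.1 hy)]
        simp
      have h9 : (∑ x ∈ A, ∑ y ∈ Aᶜ, if G.Adj x y then 1 else 0)
          = ∑ x ∈ Aᶜ, ∑ y ∈ A, if G.Adj x y then 1 else 0 := by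
        rw [Finset.sum_comm]
        exact Finset.sum_congr rfl fun x _ => Finset.sum_congr rfl fun y _ =>
          if_congr (G.adj_comm y x) rfl rfl
      have h8 : ((∑ x ∈ Aᶜ, ∑ y ∈ A, if G.Adj x y then 1 else 0) +
          ∑ x ∈ Aᶜ, ∑ y ∈ Aᶜ, if G.Adj x y then 1 else 0) ≤ #Aᶜ * #A := by
        rw [← Finset.sum_add_distrib]
        have e : ∀ x ∈ Aᶜ, ((∑ y ∈ A, if G.Adj x y then 1 else 0) +
            ∑ y ∈ Aᶜ, if G.Adj x y then 1 else 0) = G.degree x := by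
          intro x _
          rw [Finset.sum_add_sum_compl A (fun y => if G.Adj x y then 1 else 0)]
          rw [Finset.sum_boole]
          rw [← SimpleGraph.neighborFinset_eq_filter]
          simp only [Nat.cast_id]
          rfl
        rw [Finset.sum_congr rfl e]
        calc ∑ x ∈ Aᶜ, G.degree x ≤ ∑ _x ∈ Aᶜ, G.degree u :=
              Finset.sum_le_sum fun x _ => hu x (Finset.mem_univ x)
          _ = #Aᶜ * #A := by
              rw [Finset.sum_const, smul_eq_mul, hA]
              rfl
      have hcomm : #Aᶜ * #A = #A * #Aᶜ := mul_comm _ _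
      linarith [h1, h2, h3, h4, h5, h6, h7, h8, h9, hcomm]

lemma double_count_adj {V : Type u} [Fintype V] (H : SimpleGraph V) [DecidableRel H.Adj] :
    (∑ u : V, ∑ v : V, if H.Adj u v then 1 else 0) = 2 * #H.edgeFinset := by
  rw [← SimpleGraph.sum_degrees_eq_twice_card_edges]
  refine Finset.sum_congr rfl fun u _ => ?_
  rw [Finset.sum_boole]
  simp only [Nat.cast_id]
  rw [← SimpleGraph.neighborFinset_eq_filter]
  rfl

lemma count_ne_bound {V : Type u} [Fintype V] (r : ℕ) (f : V → Fin r) :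
    r * (∑ u : V, ∑ v : V, if f u ≠ f v then 1 else 0) + (Fintype.card V) ^ 2 ≤
      r * (Fintype.card V) ^ 2 := by
  classical
  set m : Fin r → ℕ := fun i => #(Finset.univ.filter fun v => f v = i) with hm
  have hsum : ∑ i, m i = Fintype.card V :=
    (Finset.card_eq_sum_card_fiberwise (fun x _ => Finset.mem_univ (f x))).symm
  have hE : (∑ u : V, ∑ v : V, if f u = f v then 1 else 0) = ∑ i, m i * m i := by
    have inner : ∀ u : V, (∑ v : V, if f u = f v then 1 else 0) = m (f u) := by
      intro u
      rw [Finset.sum_boole]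
      simp only [Nat.cast_id, hm]
      congr 1
      apply Finset.filter_congr
      intro v _
      exact eq_comm
    rw [Finset.sum_congr rfl fun u _ => inner u, ← Finset.sum_fiberwise' Finset.univ f m]
    exact Finset.sum_congr rfl fun i _ => by rw [Finset.sum_const, smul_eq_mul]
  have hCE : (∑ u : V, ∑ v : V, if f u ≠ f v then 1 else 0) +
      (∑ u : V, ∑ v : V, if f u = f v then 1 else 0) = Fintype.card V * Fintype.card V := by
    rw [← Finset.sum_add_distrib]
    have : ∀ u : V, ((∑ v : V, if f u ≠ f v then 1 else 0) +
        ∑ v : V, if f u = f v then 1 else 0) = Fintype.card V := by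
      intro u
      rw [← Finset.sum_add_distrib]
      have : ∀ v : V, ((if f u ≠ f v then 1 else 0) + if f u = f v then 1 else 0) = 1 := by
        intro v
        by_cases h : f u = f v <;> simp [h]
      rw [Finset.sum_congr rfl fun v _ => this v]
      simp [Finset.card_univ]
    rw [Finset.sum_congr rfl fun u _ => this u]
    simp [Finset.card_univ]
  have cheb : (Fintype.card V) ^ 2 ≤ r * ∑ i, m i * m i := by
    have h := sq_sum_le_card_mul_sum_sq (s := (Finset.univ : Finset (Fin r))) (f := m)
    rw [hsum] at h
    simpa [Finset.card_univ, sq] using h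
  have key : r * ((∑ u : V, ∑ v : V, if f u ≠ f v then 1 else 0) +
      (∑ u : V, ∑ v : V, if f u = f v then 1 else 0)) = r * (Fintype.card V) ^ 2 := by
    rw [hCE, sq]
  rw [mul_add, hE] at key
  omega

lemma turan_lower_bound (n r : ℕ) :
    n * n ≤ 2 * #(turanGraph n r).edgeFinset + n * (n / r + 1) := by
  have hdeg : ∀ v : Fin n, n ≤ (turanGraph n r).degree v + (n / r + 1) := by
    intro v
    set F := Finset.univ.filter (fun w : Fin n => (w : ℕ) % r = (v : ℕ) % r) with hF
    have hsplit : (turanGraph n r).degree v + #F = n := by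
      rw [SimpleGraph.degree, SimpleGraph.neighborFinset_eq_filter]
      have e : Finset.univ.filter ((turanGraph n r).Adj v) =
          Finset.univ.filter (fun w : Fin n => ¬ ((w : ℕ) % r = (v : ℕ) % r)) := by
        apply Finset.filter_congr
        intro w _
        constructor
        · exact fun h h2 => h h2.symm
        · exact fun h h2 => h h2.symm
      rw [e, add_comm, hF, Finset.card_filter_add_card_filter_not]
      simp
    have hFle : #F ≤ n / r + 1 := by
      have h := Finset.card_le_card_of_injOn (fun w : Fin n => (w : ℕ) / r)
        (s := F) (t := Finset.range (n / r + 1)) ?_ ?_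
      · simpa using h
      · intro w _
        rw [Finset.mem_coe, Finset.mem_range, Nat.lt_succ_iff]
        exact Nat.div_le_div_right (Nat.le_of_lt w.isLt)
      · intro w1 h1 w2 h2 he
        simp only [hF, Finset.coe_filter, Set.mem_setOf_eq, Finset.mem_univ, true_and] at h1 h2
        apply Fin.ext
        calc (w1 : ℕ) = r * ((w1 : ℕ) / r) + (w1 : ℕ) % r := (Nat.div_add_mod _ _).symm
          _ = r * ((w2 : ℕ) / r) + (w2 : ℕ) % r := by
              have he' : (w1 : ℕ) / r = (w2 : ℕ) / r := he
              rw [he', h1, h2]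
          _ = (w2 : ℕ) := Nat.div_add_mod _ _
    omega
  have hs : ∑ v : Fin n, (turanGraph n r).degree v = 2 * #(turanGraph n r).edgeFinset :=
    SimpleGraph.sum_degrees_eq_twice_card_edges _
  calc n * n = ∑ _v : Fin n, n := by simp [Finset.card_univ, mul_comm]
    _ ≤ ∑ v : Fin n, ((turanGraph n r).degree v + (n / r + 1)) :=
        Finset.sum_le_sum fun v _ => hdeg v
    _ = 2 * #(turanGraph n r).edgeFinset + n * (n / r + 1) := by
        rw [Finset.sum_add_distrib, hs, Finset.sum_const, smul_eq_mul, Finset.card_univ]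
        simp [mul_comm]


/-- The `r`-partite subgraph of `G` induced by a colouring `f`. -/
def partGraph {V : Type u} (G : SimpleGraph V) {r : ℕ} (f : V → Fin r) : SimpleGraph V where
  Adj a b := G.Adj a b ∧ f a ≠ f b
  symm := ⟨fun a b h => ⟨h.1.symm, Ne.symm h.2⟩⟩
  loopless := ⟨fun a h => G.loopless.irrefl a h.1⟩

/-- The subgraph of `G` consisting of edges within colour classes of `f`. -/
def badGraph {V : Type u} (G : SimpleGraph V) {r : ℕ} (f : V → Fin r) : SimpleGraph V where
  Adj a b := G.Adj a b ∧ f a = f b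
  symm := ⟨fun a b h => ⟨h.1.symm, h.2.symm⟩⟩
  loopless := ⟨fun a h => G.loopless.irrefl a h.1⟩

end ErdosSimonovitsAux

set_option maxHeartbeats 1000000 in
/-- **Erdős–Simonovits stability** (Theorem 1.6): for `r ≥ 2` and `ε > 0` there exist `n₀`
and `δ > 0` such that every `K_{r+1}`-free graph on `n ≥ n₀` vertices with at least
`(1 - δ) t_r(n)` edges can be made `r`-partite by deleting at most `ε n²` edges. -/
theorem erdos_simonovits_stability (r : ℕ) (hr : 2 ≤ r) (ε : ℝ) (hε : 0 < ε) :
    ∃ (n₀ : ℕ) (δ : ℝ), 0 < δ ∧ ∀ n : ℕ, n₀ ≤ n → ∀ (V : Type u) [Fintype V],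
      ∀ G : SimpleGraph V, Fintype.card V = n →
      ¬ ContainsCopy (completeGraph (Fin (r + 1))) G →
      (1 - δ) * (turanEdges r n : ℝ) ≤ (G.edgeSet.ncard : ℝ) →
      ∃ G' ≤ G, ((G.edgeSet \ G'.edgeSet).ncard : ℝ) ≤ ε * (n : ℝ) ^ 2 ∧
        G'.Colorable r := by
  classical
  refine ⟨⌈ε⁻¹⌉₊ + 1, min ε 1, lt_min hε one_pos, ?_⟩
  intro n hn V _ G hcard hfree hedges
  have hcf : G.CliqueFree (r + 1) := by
    by_contra hc
    rw [SimpleGraph.not_cliqueFree_iff] at hc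
    obtain ⟨e⟩ := hc
    exact hfree ⟨e, e.injective, fun a b hab => e.toHom.map_adj hab⟩
  obtain ⟨f, hf⟩ := ErdosSimonovitsAux.furedi_key r G hcf
  refine ⟨ErdosSimonovitsAux.partGraph G f, fun a b h => h.1, ?_,
    ⟨SimpleGraph.Coloring.mk f fun {a b} hab => hab.2⟩⟩
  have hdiff : G.edgeSet \ (ErdosSimonovitsAux.partGraph G f).edgeSet =
      (ErdosSimonovitsAux.badGraph G f).edgeSet := by
    ext e
    induction e using Sym2.ind with
    | _ a b =>
      simp only [Set.mem_diff, SimpleGraph.mem_edgeSet]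
      show G.Adj a b ∧ ¬(G.Adj a b ∧ f a ≠ f b) ↔ G.Adj a b ∧ f a = f b
      constructor
      · rintro ⟨h1, h2⟩
        refine ⟨h1, ?_⟩
        by_contra hne
        exact h2 ⟨h1, hne⟩
      · rintro ⟨h1, h2⟩
        exact ⟨h1, fun h => h.2 h2⟩
  rw [hdiff]
  -- translate everything into edge counts
  have hB : (∑ u : V, ∑ v : V, if G.Adj u v ∧ f u = f v then 1 else 0) =
      2 * (ErdosSimonovitsAux.badGraph G f).edgeFinset.card := by
    rw [← ErdosSimonovitsAux.double_count_adj (ErdosSimonovitsAux.badGraph G f)]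
    exact Finset.sum_congr rfl fun u _ => Finset.sum_congr rfl fun v _ =>
      if_congr Iff.rfl rfl rfl
  have hD : (∑ u : V, ∑ v : V, if G.Adj u v then 1 else 0) = 2 * G.edgeFinset.card :=
    ErdosSimonovitsAux.double_count_adj G
  rw [hD, hB] at hf
  have hC := ErdosSimonovitsAux.count_ne_bound r f
  rw [hcard] at hC
  have hT := ErdosSimonovitsAux.turan_lower_bound n r
  -- set up real-number quantities
  set δ : ℝ := min ε 1 with hδ
  have hδε : δ ≤ ε := min_le_left _ _
  have hδ1 : δ ≤ 1 := min_le_right _ _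
  have hr0 : (0 : ℝ) < r := by
    have : (0 : ℕ) < r := by omega
    exact_mod_cast this
  set N : ℝ := (n : ℝ) with hN
  have hN0 : 0 ≤ N := Nat.cast_nonneg n
  set Cn := (∑ u : V, ∑ v : V, if f u ≠ f v then 1 else 0) with hCn
  set eG := (G.edgeFinset.card : ℝ) with heG
  set eB := ((ErdosSimonovitsAux.badGraph G f).edgeFinset.card : ℝ) with heB
  set t := (turanEdges r n : ℝ) with ht
  have F1 : 2 * eG + 2 * eB ≤ (Cn : ℝ) := by
    rw [heG, heB, hCn]
    exact_mod_cast hf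
  have F2 : (r : ℝ) * Cn + N ^ 2 ≤ r * N ^ 2 := by
    rw [hCn, hN]
    exact_mod_cast hC
  have hturan : turanEdges r n = (turanGraph n r).edgeFinset.card := by
    rw [turanEdges, ← SimpleGraph.coe_edgeFinset, Set.ncard_coe_finset]
  have F3 : N * N ≤ 2 * t + N * (((n / r : ℕ) : ℝ) + 1) := by
    rw [ht, hturan, hN]
    exact_mod_cast hT
  have F4 : ((n / r : ℕ) : ℝ) ≤ N / r := Nat.cast_div_le
  have F5 : (1 - δ) * t ≤ eG := by
    rw [ht, heG]
    have : (G.edgeSet.ncard : ℝ) = (G.edgeFinset.card : ℝ) := by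
      rw [← SimpleGraph.coe_edgeFinset, Set.ncard_coe_finset]
    rw [← this]
    exact hedges
  have F6 : 1 ≤ ε * N := by
    have h1 : (ε⁻¹ : ℝ) ≤ ((⌈ε⁻¹⌉₊ : ℕ) : ℝ) := Nat.le_ceil _
    have h2 : ((⌈ε⁻¹⌉₊ + 1 : ℕ) : ℝ) ≤ N := by
      rw [hN]
      exact_mod_cast hn
    have h3 : ε⁻¹ ≤ N := by
      push_cast at h2
      linarith
    calc (1 : ℝ) = ε * ε⁻¹ := (mul_inv_cancel₀ (ne_of_gt hε)).symm
      _ ≤ ε * N := by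
          apply mul_le_mul_of_nonneg_left h3 (le_of_lt hε)
  -- the Turán bound, multiplied through by r
  have k1 : N * (((n / r : ℕ) : ℝ) + 1) ≤ N * (N / r + 1) := by
    apply mul_le_mul_of_nonneg_left _ hN0
    linarith
  have k2 : N * N ≤ 2 * t + N * (N / r + 1) := le_trans F3 (by linarith)
  have k3 : N * (N / r) * r = N * N := by field_simp
  have k4 : (N * N) * r ≤ (2 * t + N * (N / r + 1)) * r :=
    mul_le_mul_of_nonneg_right k2 (le_of_lt hr0)
  have h2tr : (r : ℝ) * (N * N) - N * N - r * N ≤ 2 * t * r := by nlinarith [k4, k3]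
  have m1 : 2 * (r : ℝ) * eG + 2 * r * eB ≤ r * N ^ 2 - N ^ 2 := by
    have := mul_le_mul_of_nonneg_left F1 (le_of_lt hr0)
    nlinarith [this, F2]
  have hδ0 : (0 : ℝ) < δ := lt_min hε one_pos
  have m2 : (1 - δ) * ((r : ℝ) * (N * N) - N * N - r * N) ≤ (1 - δ) * (2 * t * r) :=
    mul_le_mul_of_nonneg_left h2tr (by linarith)
  have m3 : (1 - δ) * t * (2 * r) ≤ eG * (2 * r) :=
    mul_le_mul_of_nonneg_right F5 (by linarith)
  have m4 : 2 * (r : ℝ) * eB ≤ δ * (r * N ^ 2) + r * N := by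
    nlinarith [m1, m2, m3, mul_nonneg (le_of_lt hδ0) (sq_nonneg N),
      mul_nonneg (mul_nonneg (le_of_lt hδ0) (le_of_lt hr0)) hN0]
  have m5 : N ≤ ε * N ^ 2 := by nlinarith [F6, hN0]
  have m6 : δ * ((r : ℝ) * N ^ 2) ≤ ε * ((r : ℝ) * N ^ 2) := by
    apply mul_le_mul_of_nonneg_right hδε
    positivity
  have m7 : (r : ℝ) * N ≤ r * (ε * N ^ 2) := mul_le_mul_of_nonneg_left m5 (le_of_lt hr0)
  have m8 : (2 * (r : ℝ)) * eB ≤ (2 * (r : ℝ)) * (ε * N ^ 2) := by nlinarith [m4, m6, m7]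
  have hfinal : eB ≤ ε * N ^ 2 := le_of_mul_le_mul_left m8 (by linarith)
  have : ((ErdosSimonovitsAux.badGraph G f).edgeSet.ncard : ℝ) = eB := by
    rw [heB, ← SimpleGraph.coe_edgeFinset, Set.ncard_coe_finset]
  rw [this]
  exact hfinal
end
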